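/- For every division C of a totally ordered n-element set, the number of type A C-permutations is at most the number of type B C-permutations, which in turn is at most 1^{|C_1|} 2^{|C_2|} ... n^{|C_n|}; each inequality is an equality if and only if C is superdiagonal (|C_1| + ... + |C_i| ≥ i for all i). -/

import Mathlib

open scoped Pointwise
open MeasureTheory Nat

namespace MixedEulerian

/-- A division of a finite set `S` into an ordered sequence of blocks,
with all elements of earlier blocks strictly smaller than those of later blocks. -/
def IsDivision (C : List (Finset ℕ)) (S : Finset ℕ) : Prop :=
  (∀ s ∈ S, ∃ i, i < C.length ∧ s ∈ C.getD i ∅) ∧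
  (∀ i, i < C.length → C.getD i ∅ ⊆ S) ∧
  (∀ i j, i < j → j < C.length →
    ∀ s ∈ C.getD i ∅, ∀ t ∈ C.getD j ∅, s < t)

/-- Type A admissibility: `s ∈ C_i` is admissible iff `s = min C₁`, `s = max C_n`,
or `i` is strictly between the first and the last index. (Indices are 0-based.) -/
def AdmissibleA (C : List (Finset ℕ)) (s : ℕ) : Prop :=
  ∃ i, i < C.length ∧ s ∈ C.getD i ∅ ∧
    ((i = 0 ∧ ∀ t ∈ C.getD 0 ∅, s ≤ t) ∨
     (i = C.length - 1 ∧ ∀ t ∈ C.getD i ∅, t ≤ s) ∨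
     (0 < i ∧ i + 1 < C.length))

/-- Type A deletion of `s` from the division `C`. -/
def deleteA (C : List (Finset ℕ)) (s : ℕ) : List (Finset ℕ) :=
  let i := C.findIdx (fun b => decide (s ∈ b))
  let B := C.getD i ∅
  let lo := B.filter (fun t => t < s)
  let hi := B.filter (fun t => s < t)
  if C.length ≤ 1 then []
  else if i = 0 then (hi ∪ C.getD 1 ∅) :: C.drop 2
  else if i = C.length - 1 then C.take (i - 1) ++ [C.getD (i - 1) ∅ ∪ lo]
  else C.take (i - 1) ++ [C.getD (i - 1) ∅ ∪ lo, hi ∪ C.getD (i + 1) ∅] ++ C.drop (i + 2)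

/-- `w` is a (type A) `C`-permutation: each entry is admissible in the division
obtained by deleting the previous entries, and all elements get deleted. -/
def IsCPermA : List (Finset ℕ) → List ℕ → Prop
  | C, [] => ∀ B ∈ C, B = ∅
  | C, s :: w => AdmissibleA C s ∧ IsCPermA (deleteA C s) w

/-- Type B admissibility: `s ∈ C_i` is admissible iff `s = min C₁` or `i ≠ 0`. -/
def AdmissibleB (C : List (Finset ℕ)) (s : ℕ) : Prop :=
  ∃ i, i < C.length ∧ s ∈ C.getD i ∅ ∧
    ((i = 0 ∧ ∀ t ∈ C.getD 0 ∅, s ≤ t) ∨ i ≠ 0)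

/-- Type B deletion of `s` from the division `C`. -/
def deleteB (C : List (Finset ℕ)) (s : ℕ) : List (Finset ℕ) :=
  let i := C.findIdx (fun b => decide (s ∈ b))
  if i = C.length - 1 ∧ 0 < i then
    C.take (i - 1) ++ [C.getD (i - 1) ∅ ∪ ((C.getD i ∅).erase s)]
  else deleteA C s

/-- `w` is a type B `C`-permutation. -/
def IsCPermB : List (Finset ℕ) → List ℕ → Prop
  | C, [] => ∀ B ∈ C, B = ∅
  | C, s :: w => AdmissibleB C s ∧ IsCPermB (deleteB C s) w

/-- A sequence of elements that can be successively (type A) deleted from `C`. -/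
def AdmissibleSeqA : List (Finset ℕ) → List ℕ → Prop
  | _, [] => True
  | C, s :: w => AdmissibleA C s ∧ AdmissibleSeqA (deleteA C s) w

/-- Number of descents of a list: the number of adjacent pairs that decrease. -/
def listDescents {α : Type*} [LinearOrder α] (l : List α) : ℕ :=
  (l.zip l.tail).countP (fun p => decide (p.2 < p.1))

/-- Eulerian number `A(n,k)`: permutations of `{1,…,n}` with exactly `k-1` descents. -/
def eulerianA (n k : ℕ) : ℕ :=
  (List.range' 1 n).permutations.countP (fun l => decide (listDescents l = k - 1))

/-- `A(m,t;r)`: permutations of `{1,…,m+1}` with `t-1` descents and first entry `r+1`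
(declared to be `0` when `t = 0`; it vanishes automatically when `t > m+1`). -/
def eulerianFirst (m t r : ℕ) : ℕ :=
  if t = 0 then 0 else
    (List.range' 1 (m + 1)).permutations.countP
      (fun l => decide (listDescents l = t - 1 ∧ l.headI = r + 1))

/-- The index of `t` in the `C`-permutation `w`: the (1-based) position of the block
containing `t` just before `t` is deleted. -/
def indexFn (C : List (Finset ℕ)) : List ℕ → ℕ → ℕ
  | [], _ => 0
  | s :: w, t =>
      if t = s then C.findIdx (fun b => decide (t ∈ b)) + 1
      else indexFn (deleteA C s) w t

/-- An index function of `C`: any function sending each element of `C_i` into `{1,…,i}`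
(1-based). -/
def IsIndexFn (C : List (Finset ℕ)) (I : ℕ → ℕ) : Prop :=
  ∀ i, i < C.length → ∀ s ∈ C.getD i ∅, 1 ≤ I s ∧ I s ≤ i + 1

/-- `C` is superdiagonal: `|C₁| + ⋯ + |C_i| ≥ i` for all `i`. -/
def Superdiagonal (C : List (Finset ℕ)) : Prop :=
  ∀ i, i ≤ C.length → i ≤ ∑ j ∈ Finset.range i, (C.getD j ∅).card

/-- `C` is subdiagonal: `|C_n| + ⋯ + |C_{n-i+1}| ≥ i` for all `i`. -/
def Subdiagonal (C : List (Finset ℕ)) : Prop :=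
  ∀ i, i ≤ C.length → i ≤ ∑ j ∈ Finset.range i, (C.getD (C.length - 1 - j) ∅).card

/-- The canonical division of `{1,…,c.sum}` with block sizes given by `c`. -/
def divisionOf (c : List ℕ) : List (Finset ℕ) :=
  (List.range c.length).map (fun i => Finset.Ioc ((c.take i).sum) ((c.take (i + 1)).sum))

/-- The number of `C`-permutations for a division with block sizes `c`. -/
noncomputable def NPerm (c : List ℕ) : ℕ :=
  Nat.card {w : List ℕ // IsCPermA (divisionOf c) w}

/-- The division of `{1,…,n}` with all elements in (1-based) position `k`. -/
def midDivision (n k : ℕ) : List (Finset ℕ) :=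
  List.replicate (k - 1) ∅ ++ [Finset.Icc 1 n] ++ List.replicate (n - k) ∅

/-- The hypersimplex `Δ_{k,n} ⊆ ℝ^{n+1}`. -/
def hypersimplex (n k : ℕ) : Set (Fin (n + 1) → ℝ) :=
  convexHull ℝ {x | ∃ T : Finset (Fin (n + 1)), T.card = k ∧
    x = fun i => if i ∈ T then (1 : ℝ) else 0}

/-- The permutohedron `P(y₁,…,y_m) ⊆ ℝ^m`. -/
def permutohedron {m : ℕ} (y : Fin m → ℝ) : Set (Fin m → ℝ) :=
  convexHull ℝ {x | ∃ w : Equiv.Perm (Fin m), x = y ∘ w}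

/-- The polytope `Γ_{k,n} ⊆ ℝ^n`, the convex hull of all `±e_{i₁} ± ⋯ ± e_{i_k}`. -/
def gammaPolytope (n k : ℕ) : Set (Fin n → ℝ) :=
  convexHull ℝ {x | ∃ T : Finset (Fin n), T.card = k ∧ ∃ ε : Fin n → ℝ,
    (∀ i, ε i = 1 ∨ ε i = -1) ∧ x = fun i => if i ∈ T then ε i else 0}

/-- The signed permutohedron `SP(y₁,…,y_n) ⊆ ℝ^n`. -/
def signedPermutohedron {m : ℕ} (y : Fin m → ℝ) : Set (Fin m → ℝ) :=
  convexHull ℝ {x | ∃ w : Equiv.Perm (Fin m), ∃ ε : Fin m → ℝ,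
    (∀ i, ε i = 1 ∨ ε i = -1) ∧ x = fun i => ε i * y (w i)}


section Dev
set_option linter.unreachableTactic false
set_option linter.unnecessarySeqFocus false
set_option linter.unusedTactic false

/-- union of blocks -/
def U (C : List (Finset ℕ)) : Finset ℕ := C.foldr (· ∪ ·) ∅

lemma mem_U {C : List (Finset ℕ)} {t : ℕ} : t ∈ U C ↔ ∃ B ∈ C, t ∈ B := by
  induction C with
  | nil => simp [U]
  | cons B C ih =>
    constructor
    · intro h; simp [U] at h; rcases h with h | h
      · exact ⟨B, by simp, h⟩
      · obtain ⟨B', hB', h'⟩ := ih.1 h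
        exact ⟨B', by simp [hB'], h'⟩
    · rintro ⟨B', hB', h'⟩
      simp only [List.mem_cons] at hB'
      simp only [U, List.foldr_cons, Finset.mem_union]
      rcases hB' with rfl | hB'
      · exact Or.inl h'
      · exact Or.inr (ih.2 ⟨B', hB', h'⟩)

def blkIn (C : List (Finset ℕ)) (k : ℕ) (t : ℕ) : Prop :=
  k < C.length ∧ t ∈ C.getD k ∅

lemma mem_U' {C : List (Finset ℕ)} {t : ℕ} : t ∈ U C ↔ ∃ k, blkIn C k t := by
  rw [mem_U]
  constructor
  · rintro ⟨B, hB, htB⟩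
    obtain ⟨k, hk, rfl⟩ := List.getElem_of_mem hB
    exact ⟨k, hk, by rwa [List.getD_eq_getElem _ _ hk]⟩
  · rintro ⟨k, hk, ht⟩
    exact ⟨_, List.getElem_mem hk, by rwa [List.getD_eq_getElem _ _ hk] at ht⟩

def Good (C : List (Finset ℕ)) : Prop :=
  C.Pairwise (fun A B => ∀ a ∈ A, ∀ b ∈ B, a < b) ∧ (U C).card = C.length

lemma Good.blt {C : List (Finset ℕ)} (h : Good C) {p q : ℕ} {x y : ℕ}
    (hpq : p < q) (hx : blkIn C p x) (hy : blkIn C q y) : x < y := by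
  have := List.pairwise_iff_getElem.1 h.1 p q hx.1 hy.1 hpq
  exact this x (by rw [← List.getD_eq_getElem C ∅ hx.1]; exact hx.2)
    y (by rw [← List.getD_eq_getElem C ∅ hy.1]; exact hy.2)

lemma Good.uniq {C : List (Finset ℕ)} (h : Good C) {p q t : ℕ}
    (hp : blkIn C p t) (hq : blkIn C q t) : p = q := by
  rcases lt_trichotomy p q with h' | h' | h'
  · exact absurd (h.blt h' hp hq) (lt_irrefl t)
  · exact h'
  · exact absurd (h.blt h' hq hp) (lt_irrefl t)

def posn (C : List (Finset ℕ)) (t : ℕ) : ℕ := C.findIdx (fun b => decide (t ∈ b))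

lemma posn_eq {C : List (Finset ℕ)} {t p : ℕ} (h : Good C) (hp : blkIn C p t) :
    posn C t = p := by
  rw [posn, List.findIdx_eq hp.1]
  constructor
  · simp only [decide_eq_true_iff]
    rw [← List.getD_eq_getElem C ∅ hp.1]; exact hp.2
  · intro j hj
    simp only [decide_eq_false_iff_not]
    intro hmem
    have : j = p := h.uniq ⟨lt_trans hj hp.1, by rwa [List.getD_eq_getElem C ∅ (lt_trans hj hp.1)]⟩ hp
    omega

lemma blkIn_posn {C : List (Finset ℕ)} {t : ℕ} (h : Good C) (ht : t ∈ U C) :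
    blkIn C (posn C t) t := by
  obtain ⟨k, hk⟩ := mem_U'.1 ht
  rwa [posn_eq h hk]

lemma getD_app2 (l₁ l₂ : List (Finset ℕ)) (A B : Finset ℕ) (k : ℕ) :
    (l₁ ++ [A, B] ++ l₂).getD k ∅ =
      if k < l₁.length then l₁.getD k ∅
      else if k = l₁.length then A
      else if k = l₁.length + 1 then B
      else l₂.getD (k - l₁.length - 2) ∅ := by
  simp only [List.getD_eq_getElem?_getD, List.getElem?_append, List.getElem?_cons, List.length_append,
    List.length_cons, List.length_nil]
  split_ifs <;> (try simp_all) <;> (try omega) <;>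
    (try (first | omega | (congr 2 <;> try omega)))
lemma getD_app1 (l₁ l₂ : List (Finset ℕ)) (A : Finset ℕ) (k : ℕ) :
    (l₁ ++ [A] ++ l₂).getD k ∅ =
      if k < l₁.length then l₁.getD k ∅
      else if k = l₁.length then A
      else l₂.getD (k - l₁.length - 1) ∅ := by
  simp only [List.getD_eq_getElem?_getD, List.getElem?_append, List.getElem?_cons, List.length_append,
    List.length_cons, List.length_nil]
  split_ifs <;> (try simp_all) <;> (try omega) <;>
    (try (first | omega | (congr 2 <;> try omega)))
lemma getD_take' (l : List (Finset ℕ)) (m k : ℕ) :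
    (l.take m).getD k ∅ = if k < m then l.getD k ∅ else ∅ := by
  simp only [List.getD_eq_getElem?_getD, List.getElem?_take]
  split_ifs <;> simp
lemma getD_drop' (l : List (Finset ℕ)) (m k : ℕ) :
    (l.drop m).getD k ∅ = l.getD (m + k) ∅ := by
  simp only [List.getD_eq_getElem?_getD, List.getElem?_drop]


/-- prefix sums of block sizes -/
def sumP (C : List (Finset ℕ)) (k : ℕ) : ℕ := ∑ j ∈ Finset.range k, (C.getD j ∅).card

/-- new position of `t` (in block `p`) after deleting `s` (in block `i`) from a
division of length `n`. -/
def np (i n s p t : ℕ) : ℕ :=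
  if p < i then p else if p = i ∧ s < t ∧ i + 1 < n then i else p - 1

lemma np_le {i n s p t : ℕ} : np i n s p t ≤ p := by unfold np; split_ifs <;> omega

lemma np_ge {i n s p t : ℕ} : p - 1 ≤ np i n s p t := by unfold np; split_ifs <;> omega

lemma deleteA_def' (C : List (Finset ℕ)) (s : ℕ) : deleteA C s =
    (if C.length ≤ 1 then [] else
     if posn C s = 0 then
       ((C.getD (posn C s) ∅).filter (fun t => s < t) ∪ C.getD 1 ∅) :: C.drop 2
     else if posn C s = C.length - 1 then
       C.take (posn C s - 1) ++
         [C.getD (posn C s - 1) ∅ ∪ (C.getD (posn C s) ∅).filter (fun t => t < s)]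
     else C.take (posn C s - 1) ++
       [C.getD (posn C s - 1) ∅ ∪ (C.getD (posn C s) ∅).filter (fun t => t < s),
        (C.getD (posn C s) ∅).filter (fun t => s < t) ∪ C.getD (posn C s + 1) ∅] ++
       C.drop (posn C s + 2)) := rfl

lemma deleteB_def' (C : List (Finset ℕ)) (s : ℕ) : deleteB C s =
    (if posn C s = C.length - 1 ∧ 0 < posn C s then
       C.take (posn C s - 1) ++ [C.getD (posn C s - 1) ∅ ∪ ((C.getD (posn C s) ∅).erase s)]
     else deleteA C s) := rfl

lemma sumP_zero (C : List (Finset ℕ)) : sumP C 0 = 0 := by simp [sumP]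

lemma sumP_succ (C : List (Finset ℕ)) (k : ℕ) :
    sumP C (k + 1) = sumP C k + (C.getD k ∅).card := Finset.sum_range_succ _ _

lemma sumP_pos {C : List (Finset ℕ)} {s m : ℕ} (hs : s ∈ C.getD 0 ∅) (hm : 1 ≤ m) :
    1 ≤ sumP C m := by
  have h1 : 1 ≤ (C.getD 0 ∅).card := Finset.card_pos.2 ⟨s, hs⟩
  calc 1 ≤ (C.getD 0 ∅).card := h1
    _ ≤ sumP C m := Finset.single_le_sum (f := fun j => (C.getD j ∅).card)
        (fun _ _ => Nat.zero_le _) (Finset.mem_range.2 hm)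

section ZeroCase
variable {C : List (Finset ℕ)} {s : ℕ}

lemma zero_eq (hG : Good C) (h0 : blkIn C 0 s) (hn : 1 < C.length) :
    deleteB C s =
      ((C.getD 0 ∅).filter (fun t => s < t) ∪ C.getD 1 ∅) :: C.drop 2 := by
  have hpos : posn C s = 0 := posn_eq hG h0
  rw [deleteB_def', deleteA_def', hpos]
  rw [if_neg (by omega), if_neg (by omega), if_pos rfl]

lemma zero_getD (hG : Good C) (h0 : blkIn C 0 s) (hn : 1 < C.length) (k : ℕ) :
    (deleteB C s).getD k ∅ =
      if k = 0 then (C.getD 0 ∅).filter (fun t => s < t) ∪ C.getD 1 ∅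
      else C.getD (k + 1) ∅ := by
  rw [zero_eq hG h0 hn,
    show (((C.getD 0 ∅).filter (fun t => s < t) ∪ C.getD 1 ∅) :: C.drop 2)
       = [] ++ [((C.getD 0 ∅).filter (fun t => s < t) ∪ C.getD 1 ∅)] ++ C.drop 2 from rfl,
    getD_app1, getD_drop']
  simp only [List.length_nil]
  split_ifs <;> (try omega) <;> (try (congr 1; omega)) <;> rfl

lemma zero_len (hG : Good C) (h0 : blkIn C 0 s) (hn : 1 < C.length) :
    (deleteB C s).length = C.length - 1 := by
  rw [zero_eq hG h0 hn]; simp; omega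

lemma zero_union (hG : Good C) (h0 : blkIn C 0 s) (hn : 1 < C.length)
    (hmin : ∀ t ∈ C.getD 0 ∅, s ≤ t) :
    U (deleteB C s) = (U C).erase s := by
  ext t
  simp only [Finset.mem_erase, mem_U']
  constructor
  · rintro ⟨k, hk, ht⟩
    rw [zero_getD hG h0 hn] at ht
    rw [zero_len hG h0 hn] at hk
    by_cases hk0 : k = 0
    · rw [if_pos hk0] at ht
      rcases Finset.mem_union.1 ht with h | h
      · rw [Finset.mem_filter] at h
        exact ⟨h.2.ne', 0, by omega, h.1⟩
      · refine ⟨fun hts => ?_, 1, hn, h⟩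
        subst hts
        exact absurd (hG.uniq ⟨hn, h⟩ h0) (by omega)
    · rw [if_neg hk0] at ht
      have hlt : k + 1 < C.length := by omega
      refine ⟨fun hts => ?_, k + 1, hlt, ht⟩
      subst hts
      exact absurd (hG.uniq ⟨hlt, ht⟩ h0) (by omega)
  · rintro ⟨hts, p, hp, ht⟩
    rcases Nat.lt_or_ge p 2 with hp2 | hp2
    · interval_cases p
      · refine ⟨0, by rw [zero_len hG h0 hn]; omega, ?_⟩
        rw [zero_getD hG h0 hn, if_pos rfl]
        exact Finset.mem_union_left _ (Finset.mem_filter.2 ⟨ht, lt_of_le_of_ne (hmin t ht) (Ne.symm hts)⟩)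
      · refine ⟨0, by rw [zero_len hG h0 hn]; omega, ?_⟩
        rw [zero_getD hG h0 hn, if_pos rfl]
        exact Finset.mem_union_right _ ht
    · refine ⟨p - 1, by rw [zero_len hG h0 hn]; omega, ?_⟩
      rw [zero_getD hG h0 hn, if_neg (by omega)]
      have : p - 1 + 1 = p := by omega
      rw [this]; exact ht

lemma zero_transport (hG : Good C) (h0 : blkIn C 0 s) (hn : 1 < C.length)
    (hmin : ∀ t ∈ C.getD 0 ∅, s ≤ t) {t p : ℕ} (hts : t ≠ s) (hp : blkIn C p t) :
    blkIn (deleteB C s) (np 0 C.length s p t) t := by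
  rcases Nat.lt_or_ge p 2 with hp2 | hp2
  · interval_cases p
    · have hst : s < t := lt_of_le_of_ne (hmin t hp.2) (Ne.symm hts)
      have : np 0 C.length s 0 t = 0 := by unfold np; split_ifs <;> omega
      rw [this]
      refine ⟨by rw [zero_len hG h0 hn]; omega, ?_⟩
      rw [zero_getD hG h0 hn, if_pos rfl]
      exact Finset.mem_union_left _ (Finset.mem_filter.2 ⟨hp.2, hst⟩)
    · have : np 0 C.length s 1 t = 0 := by unfold np; split_ifs <;> omega
      rw [this]
      refine ⟨by rw [zero_len hG h0 hn]; omega, ?_⟩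
      rw [zero_getD hG h0 hn, if_pos rfl]
      exact Finset.mem_union_right _ hp.2
  · have hpl := hp.1
    have : np 0 C.length s p t = p - 1 := by unfold np; split_ifs <;> omega
    rw [this]
    refine ⟨by rw [zero_len hG h0 hn]; omega, ?_⟩
    rw [zero_getD hG h0 hn, if_neg (by omega)]
    have h2 : p - 1 + 1 = p := by omega
    rw [h2]; exact hp.2

lemma zero_good (hG : Good C) (h0 : blkIn C 0 s) (hn : 1 < C.length)
    (hmin : ∀ t ∈ C.getD 0 ∅, s ≤ t) :
    Good (deleteB C s) := by
  constructor
  · rw [List.pairwise_iff_getElem]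
    intro a b ha hb hab x hx y hy
    rw [← List.getD_eq_getElem _ ∅ ha, zero_getD hG h0 hn] at hx
    rw [← List.getD_eq_getElem _ ∅ hb, zero_getD hG h0 hn] at hy
    rw [zero_len hG h0 hn] at ha hb
    rw [if_neg (by omega)] at hy
    have hby : blkIn C (b + 1) y := ⟨by omega, hy⟩
    by_cases ha0 : a = 0
    · rw [if_pos ha0] at hx
      rcases Finset.mem_union.1 hx with h | h
      · exact hG.blt (by omega) ⟨by omega, (Finset.mem_filter.1 h).1⟩ hby
      · exact hG.blt (by omega) ⟨by omega, h⟩ hby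
    · rw [if_neg ha0] at hx
      exact hG.blt (by omega) ⟨by omega, hx⟩ hby
  · rw [zero_union hG h0 hn hmin, zero_len hG h0 hn,
      Finset.card_erase_of_mem (mem_U'.2 ⟨0, h0⟩), hG.2]

lemma zero_prefix (hG : Good C) (h0 : blkIn C 0 s) (hn : 1 < C.length)
    (hmin : ∀ t ∈ C.getD 0 ∅, s ≤ t) :
    ∀ k, sumP (deleteB C s) k = if k = 0 then 0 else sumP C (k + 1) - 1 := by
  have hfil : (C.getD 0 ∅).filter (fun t => s < t) = (C.getD 0 ∅).erase s := by
    ext t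
    simp only [Finset.mem_filter, Finset.mem_erase]
    constructor
    · rintro ⟨h1, h2⟩; exact ⟨h2.ne', h1⟩
    · rintro ⟨h1, h2⟩; exact ⟨h2, lt_of_le_of_ne (hmin t h2) (Ne.symm h1)⟩
  have hdisj : Disjoint ((C.getD 0 ∅).filter (fun t => s < t)) (C.getD 1 ∅) := by
    rw [Finset.disjoint_left]
    intro x hx hx1
    have h1 : blkIn C 0 x := ⟨by omega, (Finset.mem_filter.1 hx).1⟩
    have h2 : blkIn C 1 x := ⟨hn, hx1⟩
    exact absurd (hG.uniq h1 h2) (by omega)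
  intro k
  induction k with
  | zero => simp [sumP]
  | succ k ih =>
    rw [sumP_succ, ih]
    by_cases hk0 : k = 0
    · subst hk0
      rw [if_pos rfl, if_neg (Nat.succ_ne_zero 0), zero_getD hG h0 hn, if_pos rfl,
        Finset.card_union_of_disjoint hdisj, hfil, Finset.card_erase_of_mem h0.2]
      have h2 : sumP C 2 = (C.getD 0 ∅).card + (C.getD 1 ∅).card := by
        simp [sumP, Finset.sum_range_succ]
      have h3 : 1 ≤ (C.getD 0 ∅).card := Finset.card_pos.2 ⟨s, h0.2⟩
      have h4 : sumP C (0 + 1 + 1) = sumP C 2 := by norm_num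
      omega
    · rw [if_neg hk0, if_neg (by omega : ¬(k+1 = 0)), zero_getD hG h0 hn, if_neg hk0]
      have h1 : sumP C (k + 1 + 1) = sumP C (k + 1) + (C.getD (k+1) ∅).card := sumP_succ _ _
      have h2 : 1 ≤ sumP C (k + 1) := sumP_pos h0.2 (by omega)
      omega

end ZeroCase

section MidCase
variable {C : List (Finset ℕ)} {s i : ℕ}

lemma mid_eq (hG : Good C) (hi : blkIn C i s) (h0 : 0 < i) (hin : i + 1 < C.length) :
    deleteB C s = C.take (i-1) ++
      [C.getD (i-1) ∅ ∪ (C.getD i ∅).filter (fun t => t < s),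
       (C.getD i ∅).filter (fun t => s < t) ∪ C.getD (i+1) ∅] ++ C.drop (i+2) := by
  have hpos : posn C s = i := posn_eq hG hi
  rw [deleteB_def', deleteA_def', hpos]
  rw [if_neg (by omega), if_neg (by omega), if_neg (by omega), if_neg (by omega)]

lemma mid_getD (hG : Good C) (hi : blkIn C i s) (h0 : 0 < i) (hin : i + 1 < C.length) (k : ℕ) :
    (deleteB C s).getD k ∅ =
      if k < i - 1 then C.getD k ∅
      else if k = i - 1 then C.getD (i-1) ∅ ∪ (C.getD i ∅).filter (fun t => t < s)
      else if k = i then (C.getD i ∅).filter (fun t => s < t) ∪ C.getD (i+1) ∅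
      else C.getD (k + 1) ∅ := by
  rw [mid_eq hG hi h0 hin, getD_app2, getD_take', getD_drop']
  have hlt : (C.take (i-1)).length = i - 1 := by rw [List.length_take]; omega
  rw [hlt]
  split_ifs <;> (try omega) <;> (try (congr 1; omega)) <;> rfl

lemma mid_len (hG : Good C) (hi : blkIn C i s) (h0 : 0 < i) (hin : i + 1 < C.length) :
    (deleteB C s).length = C.length - 1 := by
  rw [mid_eq hG hi h0 hin]
  simp [List.length_take, List.length_drop]
  omega

/-- source analysis for blocks of the deleted division -/
lemma mid_src (hG : Good C) (hi : blkIn C i s) (h0 : 0 < i) (hin : i + 1 < C.length)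
    {a x : ℕ} (ha : a < (deleteB C s).length) (hx : x ∈ (deleteB C s).getD a ∅) :
    ∃ p, blkIn C p x ∧ x ≠ s ∧ (p = a ∨ p = a + 1) ∧
      (a < i - 1 → p = a) ∧
      (a = i - 1 → (p = i - 1 ∨ (p = i ∧ x < s))) ∧
      (a = i → ((p = i ∧ s < x) ∨ p = i + 1)) ∧
      (i < a → p = a + 1) := by
  rw [mid_len hG hi h0 hin] at ha
  rw [mid_getD hG hi h0 hin] at hx
  split_ifs at hx with h1 h2 h3
  · refine ⟨a, ⟨by omega, hx⟩, fun hxs => ?_, by omega, fun _ => rfl, by omega, by omega, by omega⟩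
    subst hxs; exact absurd (hG.uniq ⟨by omega, hx⟩ hi) (by omega)
  · rcases Finset.mem_union.1 hx with h | h
    · refine ⟨i - 1, ⟨by omega, h⟩, fun hxs => ?_, by omega, by omega, fun _ => Or.inl rfl, by omega, by omega⟩
      subst hxs; exact absurd (hG.uniq ⟨by omega, h⟩ hi) (by omega)
    · rw [Finset.mem_filter] at h
      exact ⟨i, ⟨hi.1, h.1⟩, by omega, by omega, by omega, fun _ => Or.inr ⟨rfl, h.2⟩, by omega, by omega⟩
  · rcases Finset.mem_union.1 hx with h | h
    · rw [Finset.mem_filter] at h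
      exact ⟨i, ⟨hi.1, h.1⟩, by omega, by omega, by omega, by omega, fun _ => Or.inl ⟨rfl, h.2⟩, by omega⟩
    · refine ⟨i + 1, ⟨by omega, h⟩, fun hxs => ?_, by omega, by omega, by omega, fun _ => Or.inr rfl, by omega⟩
      subst hxs; exact absurd (hG.uniq ⟨by omega, h⟩ hi) (by omega)
  · refine ⟨a + 1, ⟨by omega, hx⟩, fun hxs => ?_, by omega, by omega, by omega, by omega, fun _ => rfl⟩
    subst hxs; exact absurd (hG.uniq ⟨by omega, hx⟩ hi) (by omega)

lemma mid_union (hG : Good C) (hi : blkIn C i s) (h0 : 0 < i) (hin : i + 1 < C.length) :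
    U (deleteB C s) = (U C).erase s := by
  ext t
  simp only [Finset.mem_erase, mem_U']
  constructor
  · rintro ⟨k, hk, ht⟩
    obtain ⟨p, hp, hts, -⟩ := mid_src hG hi h0 hin hk ht
    exact ⟨hts, p, hp⟩
  · rintro ⟨hts, p, hp⟩
    have hpl := hp.1
    have hmem := hp.2
    rcases Nat.lt_or_ge p (i-1) with h1 | h1
    · exact ⟨p, by rw [mid_len hG hi h0 hin]; omega,
        by rw [mid_getD hG hi h0 hin, if_pos h1]; exact hmem⟩
    · by_cases h2 : p = i - 1
      · refine ⟨i - 1, by rw [mid_len hG hi h0 hin]; omega, ?_⟩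
        rw [mid_getD hG hi h0 hin, if_neg (by omega), if_pos rfl]
        rw [h2] at hmem
        exact Finset.mem_union_left _ hmem
      · by_cases h3 : p = i
        · rw [h3] at hmem
          rcases Nat.lt_or_ge t s with hlt | hge
          · refine ⟨i - 1, by rw [mid_len hG hi h0 hin]; omega, ?_⟩
            rw [mid_getD hG hi h0 hin, if_neg (by omega), if_pos rfl]
            exact Finset.mem_union_right _ (Finset.mem_filter.2 ⟨hmem, hlt⟩)
          · have hst : s < t := lt_of_le_of_ne hge (Ne.symm hts)
            refine ⟨i, by rw [mid_len hG hi h0 hin]; omega, ?_⟩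
            rw [mid_getD hG hi h0 hin, if_neg (by omega), if_neg (by omega), if_pos rfl]
            exact Finset.mem_union_left _ (Finset.mem_filter.2 ⟨hmem, hst⟩)
        · by_cases h4 : p = i + 1
          · rw [h4] at hmem
            refine ⟨i, by rw [mid_len hG hi h0 hin]; omega, ?_⟩
            rw [mid_getD hG hi h0 hin, if_neg (by omega), if_neg (by omega), if_pos rfl]
            exact Finset.mem_union_right _ hmem
          · refine ⟨p - 1, by rw [mid_len hG hi h0 hin]; omega, ?_⟩
            rw [mid_getD hG hi h0 hin, if_neg (by omega), if_neg (by omega), if_neg (by omega)]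
            have : p - 1 + 1 = p := by omega
            rw [this]; exact hmem

lemma mid_transport (hG : Good C) (hi : blkIn C i s) (h0 : 0 < i) (hin : i + 1 < C.length)
    {t p : ℕ} (hts : t ≠ s) (hp : blkIn C p t) :
    blkIn (deleteB C s) (np i C.length s p t) t := by
  have hpl := hp.1
  have hmem := hp.2
  rcases Nat.lt_or_ge p (i-1) with h1 | h1
  · have : np i C.length s p t = p := by unfold np; split_ifs <;> omega
    rw [this]
    exact ⟨by rw [mid_len hG hi h0 hin]; omega,
      by rw [mid_getD hG hi h0 hin, if_pos h1]; exact hmem⟩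
  · by_cases h2 : p = i - 1
    · have : np i C.length s p t = i - 1 := by unfold np; split_ifs <;> omega
      rw [this]
      refine ⟨by rw [mid_len hG hi h0 hin]; omega, ?_⟩
      rw [mid_getD hG hi h0 hin, if_neg (by omega), if_pos rfl]
      rw [h2] at hmem
      exact Finset.mem_union_left _ hmem
    · by_cases h3 : p = i
      · rw [h3] at hmem
        rcases Nat.lt_or_ge t s with hlt | hge
        · have : np i C.length s p t = i - 1 := by unfold np; split_ifs <;> omega
          rw [this]
          refine ⟨by rw [mid_len hG hi h0 hin]; omega, ?_⟩
          rw [mid_getD hG hi h0 hin, if_neg (by omega), if_pos rfl]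
          exact Finset.mem_union_right _ (Finset.mem_filter.2 ⟨hmem, hlt⟩)
        · have hst : s < t := lt_of_le_of_ne hge (Ne.symm hts)
          have : np i C.length s p t = i := by unfold np; split_ifs <;> omega
          rw [this]
          refine ⟨by rw [mid_len hG hi h0 hin]; omega, ?_⟩
          rw [mid_getD hG hi h0 hin, if_neg (by omega), if_neg (by omega), if_pos rfl]
          exact Finset.mem_union_left _ (Finset.mem_filter.2 ⟨hmem, hst⟩)
      · have hnp : np i C.length s p t = p - 1 := by unfold np; split_ifs <;> omega
        rw [hnp]
        by_cases h4 : p = i + 1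
        · rw [h4] at hmem
          refine ⟨by rw [mid_len hG hi h0 hin]; omega, ?_⟩
          rw [mid_getD hG hi h0 hin, if_neg (by omega), if_neg (by omega), if_pos (by omega)]
          exact Finset.mem_union_right _ hmem
        · refine ⟨by rw [mid_len hG hi h0 hin]; omega, ?_⟩
          rw [mid_getD hG hi h0 hin, if_neg (by omega), if_neg (by omega), if_neg (by omega)]
          have : p - 1 + 1 = p := by omega
          rw [this]; exact hmem

lemma mid_good (hG : Good C) (hi : blkIn C i s) (h0 : 0 < i) (hin : i + 1 < C.length) :
    Good (deleteB C s) := by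
  constructor
  · rw [List.pairwise_iff_getElem]
    intro a b ha hb hab x hx y hy
    rw [← List.getD_eq_getElem _ ∅ ha] at hx
    rw [← List.getD_eq_getElem _ ∅ hb] at hy
    obtain ⟨px, hpx, -, hx2, hx3, hx4, hx5, hx6⟩ := mid_src hG hi h0 hin ha hx
    obtain ⟨py, hpy, -, hy2, hy3, hy4, hy5, hy6⟩ := mid_src hG hi h0 hin hb hy
    rcases Nat.lt_or_ge px py with hlt | hge
    · exact hG.blt hlt hpx hpy
    · rcases hx2 with hpx2 | hpx2 <;> rcases hy2 with hpy2 | hpy2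
      · omega
      · omega
      · have hb2 : b = a + 1 := by omega
        rcases Nat.lt_trichotomy a (i-1) with h1 | h1 | h1
        · have := hx3 h1; omega
        · have hxi : px = i ∧ x < s := by
            rcases hx4 h1 with h | h
            · omega
            · exact h
          have hyb : b = i := by omega
          have hyi : py = i ∧ s < y := by
            rcases hy5 hyb with h | h
            · exact h
            · omega
          exact lt_trans hxi.2 hyi.2
        · by_cases hai : a = i
          · rcases hx5 hai with h | h
            · omega
            · have := hy6 (by omega : i < b); omega
          · have := hx6 (by omega : i < a)
            have := hy6 (by omega : i < b)
            omega
      · omega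
  · rw [mid_union hG hi h0 hin, mid_len hG hi h0 hin,
      Finset.card_erase_of_mem (mem_U'.2 ⟨i, hi⟩), hG.2]

lemma filter_card_split (hG : Good C) (hi : blkIn C i s) :
    ((C.getD i ∅).filter (fun t => t < s)).card + ((C.getD i ∅).filter (fun t => s < t)).card
      = (C.getD i ∅).card - 1 := by
  have hsub : (C.getD i ∅).filter (fun t => t < s) ∪ (C.getD i ∅).filter (fun t => s < t)
      = (C.getD i ∅).erase s := by
    ext t
    simp only [Finset.mem_union, Finset.mem_filter, Finset.mem_erase]
    constructor
    · rintro (⟨h1, h2⟩ | ⟨h1, h2⟩)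
      · exact ⟨by omega, h1⟩
      · exact ⟨by omega, h1⟩
    · rintro ⟨h1, h2⟩
      rcases Nat.lt_or_ge t s with h | h
      · exact Or.inl ⟨h2, h⟩
      · exact Or.inr ⟨h2, by omega⟩
  have hdisj : Disjoint ((C.getD i ∅).filter (fun t => t < s)) ((C.getD i ∅).filter (fun t => s < t)) := by
    rw [Finset.disjoint_left]
    intro x hx hx'
    rw [Finset.mem_filter] at hx hx'
    omega
  rw [← Finset.card_union_of_disjoint hdisj, hsub, Finset.card_erase_of_mem hi.2]

lemma mid_prefix (hG : Good C) (hi : blkIn C i s) (h0 : 0 < i) (hin : i + 1 < C.length) :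
    ∀ k, sumP (deleteB C s) k =
      if k < i then sumP C k
      else if k = i then sumP C i + ((C.getD i ∅).filter (fun t => t < s)).card
      else sumP C (k + 1) - 1 := by
  have hd1 : Disjoint (C.getD (i-1) ∅) ((C.getD i ∅).filter (fun t => t < s)) := by
    rw [Finset.disjoint_left]
    intro x hx hx'
    rw [Finset.mem_filter] at hx'
    exact absurd (hG.uniq ⟨by omega, hx⟩ ⟨hi.1, hx'.1⟩) (by omega)
  have hd2 : Disjoint ((C.getD i ∅).filter (fun t => s < t)) (C.getD (i+1) ∅) := by
    rw [Finset.disjoint_left]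
    intro x hx hx'
    rw [Finset.mem_filter] at hx
    exact absurd (hG.uniq ⟨hi.1, hx.1⟩ ⟨by omega, hx'⟩) (by omega)
  intro k
  induction k with
  | zero =>
    simp only [sumP_zero]
    rw [if_pos h0]
  | succ k ih =>
    rw [sumP_succ, ih, mid_getD hG hi h0 hin]
    have hci : 1 ≤ (C.getD i ∅).card := Finset.card_pos.2 ⟨s, hi.2⟩
    have hsplit := filter_card_split hG hi
    by_cases h1 : k < i - 1
    · rw [if_pos (show k < i by omega), if_pos h1, if_pos (show k + 1 < i by omega), sumP_succ]
    · by_cases h2 : k = i - 1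
      · rw [if_pos (show k < i by omega), if_neg (show ¬ k < i - 1 by omega), if_pos h2,
          if_neg (show ¬ k + 1 < i by omega), if_pos (show k + 1 = i by omega)]
        rw [Finset.card_union_of_disjoint hd1]
        have e1 : sumP C (k + 1) = sumP C k + (C.getD k ∅).card := sumP_succ _ _
        have e2 : (C.getD k ∅).card = (C.getD (i - 1) ∅).card := by rw [h2]
        have e3 : sumP C (k + 1) = sumP C i := by rw [show k + 1 = i by omega]
        omega
      · by_cases h3 : k = i
        · rw [if_neg (show ¬ k < i by omega), if_pos h3, if_neg (show ¬ k < i - 1 by omega),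
            if_neg (show ¬ k = i - 1 by omega), if_pos h3,
            if_neg (show ¬ k + 1 < i by omega), if_neg (show ¬ k + 1 = i by omega)]
          rw [Finset.card_union_of_disjoint hd2]
          have e1 : sumP C (k + 1 + 1) = sumP C (k + 1) + (C.getD (k+1) ∅).card := sumP_succ _ _
          have e2 : sumP C (k + 1) = sumP C k + (C.getD k ∅).card := sumP_succ _ _
          have e3 : sumP C k = sumP C i := by rw [h3]
          have e4 : (C.getD k ∅).card = (C.getD i ∅).card := by rw [h3]
          have e5 : (C.getD (k + 1) ∅).card = (C.getD (i + 1) ∅).card := by rw [h3]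
          omega
        · rw [if_neg (show ¬ k < i by omega), if_neg h3, if_neg (show ¬ k < i - 1 by omega),
            if_neg (show ¬ k = i - 1 by omega), if_neg h3,
            if_neg (show ¬ k + 1 < i by omega), if_neg (show ¬ k + 1 = i by omega)]
          have e1 : sumP C (k + 1 + 1) = sumP C (k + 1) + (C.getD (k+1) ∅).card := sumP_succ _ _
          have e2 : 1 ≤ sumP C (k + 1) := by
            have : (C.getD i ∅).card ≤ sumP C (k+1) := by
              apply Finset.single_le_sum (f := fun j => (C.getD j ∅).card)
                (fun _ _ => Nat.zero_le _)
              rw [Finset.mem_range]; omega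
            omega
          omega

end MidCase

section LastCase
variable {C : List (Finset ℕ)} {s i : ℕ}

lemma lastB_eq (hG : Good C) (hi : blkIn C i s) (h0 : 0 < i) (hin : i = C.length - 1) :
    deleteB C s = C.take (i-1) ++ [C.getD (i-1) ∅ ∪ (C.getD i ∅).erase s] := by
  have hpos : posn C s = i := posn_eq hG hi
  rw [deleteB_def', hpos, if_pos ⟨hin, h0⟩]

lemma lastB_getD (hG : Good C) (hi : blkIn C i s) (h0 : 0 < i) (hin : i = C.length - 1) (k : ℕ) :
    (deleteB C s).getD k ∅ =
      if k < i - 1 then C.getD k ∅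
      else if k = i - 1 then C.getD (i-1) ∅ ∪ (C.getD i ∅).erase s
      else ∅ := by
  have hil := hi.1
  rw [lastB_eq hG hi h0 hin,
    show C.take (i-1) ++ [C.getD (i-1) ∅ ∪ (C.getD i ∅).erase s]
       = C.take (i-1) ++ [C.getD (i-1) ∅ ∪ (C.getD i ∅).erase s] ++ [] from by simp,
    getD_app1, getD_take']
  have hlt : (C.take (i-1)).length = i - 1 := by rw [List.length_take]; omega
  rw [hlt]
  split_ifs <;> (try omega) <;> (try rfl) <;> simp

lemma lastB_len (hG : Good C) (hi : blkIn C i s) (h0 : 0 < i) (hin : i = C.length - 1) :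
    (deleteB C s).length = C.length - 1 := by
  have hil := hi.1
  rw [lastB_eq hG hi h0 hin]
  simp [List.length_take]
  omega

lemma lastB_src (hG : Good C) (hi : blkIn C i s) (h0 : 0 < i) (hin : i = C.length - 1)
    {a x : ℕ} (ha : a < (deleteB C s).length) (hx : x ∈ (deleteB C s).getD a ∅) :
    ∃ p, blkIn C p x ∧ x ≠ s ∧ (p = a ∨ p = a + 1) ∧
      (a < i - 1 → p = a) ∧ (a = i - 1 → (p = i - 1 ∨ p = i)) := by
  have hil := hi.1
  rw [lastB_len hG hi h0 hin] at ha
  rw [lastB_getD hG hi h0 hin] at hx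
  split_ifs at hx with h1 h2
  · refine ⟨a, ⟨by omega, hx⟩, fun hxs => ?_, by omega, fun _ => rfl, by omega⟩
    subst hxs; exact absurd (hG.uniq ⟨by omega, hx⟩ hi) (by omega)
  · rcases Finset.mem_union.1 hx with h | h
    · refine ⟨i - 1, ⟨by omega, h⟩, fun hxs => ?_, by omega, by omega, fun _ => Or.inl rfl⟩
      subst hxs; exact absurd (hG.uniq ⟨by omega, h⟩ hi) (by omega)
    · rw [Finset.mem_erase] at h
      exact ⟨i, ⟨hi.1, h.2⟩, h.1, by omega, by omega, fun _ => Or.inr rfl⟩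
  · exact absurd hx (Finset.notMem_empty x)

lemma lastB_union (hG : Good C) (hi : blkIn C i s) (h0 : 0 < i) (hin : i = C.length - 1) :
    U (deleteB C s) = (U C).erase s := by
  have hil := hi.1
  ext t
  simp only [Finset.mem_erase, mem_U']
  constructor
  · rintro ⟨k, hk, ht⟩
    obtain ⟨p, hp, hts, -⟩ := lastB_src hG hi h0 hin hk ht
    exact ⟨hts, p, hp⟩
  · rintro ⟨hts, p, hp⟩
    have hpl := hp.1
    have hmem := hp.2
    rcases Nat.lt_or_ge p (i-1) with h1 | h1
    · exact ⟨p, by rw [lastB_len hG hi h0 hin]; omega,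
        by rw [lastB_getD hG hi h0 hin, if_pos h1]; exact hmem⟩
    · refine ⟨i - 1, by rw [lastB_len hG hi h0 hin]; omega, ?_⟩
      rw [lastB_getD hG hi h0 hin, if_neg (by omega), if_pos rfl]
      by_cases h2 : p = i - 1
      · rw [h2] at hmem
        exact Finset.mem_union_left _ hmem
      · have h3 : p = i := by omega
        rw [h3] at hmem
        exact Finset.mem_union_right _ (Finset.mem_erase.2 ⟨hts, hmem⟩)

lemma lastB_transport (hG : Good C) (hi : blkIn C i s) (h0 : 0 < i) (hin : i = C.length - 1)
    {t p : ℕ} (hts : t ≠ s) (hp : blkIn C p t) :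
    blkIn (deleteB C s) (np i C.length s p t) t := by
  have hil := hi.1
  have hpl := hp.1
  have hmem := hp.2
  rcases Nat.lt_or_ge p (i-1) with h1 | h1
  · have : np i C.length s p t = p := by unfold np; split_ifs <;> omega
    rw [this]
    exact ⟨by rw [lastB_len hG hi h0 hin]; omega,
      by rw [lastB_getD hG hi h0 hin, if_pos h1]; exact hmem⟩
  · have : np i C.length s p t = i - 1 := by unfold np; split_ifs <;> omega
    rw [this]
    refine ⟨by rw [lastB_len hG hi h0 hin]; omega, ?_⟩
    rw [lastB_getD hG hi h0 hin, if_neg (by omega), if_pos rfl]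
    by_cases h2 : p = i - 1
    · rw [h2] at hmem
      exact Finset.mem_union_left _ hmem
    · have h3 : p = i := by omega
      rw [h3] at hmem
      exact Finset.mem_union_right _ (Finset.mem_erase.2 ⟨hts, hmem⟩)

lemma lastB_good (hG : Good C) (hi : blkIn C i s) (h0 : 0 < i) (hin : i = C.length - 1) :
    Good (deleteB C s) := by
  have hil := hi.1
  constructor
  · rw [List.pairwise_iff_getElem]
    intro a b ha hb hab x hx y hy
    rw [← List.getD_eq_getElem _ ∅ ha] at hx
    rw [← List.getD_eq_getElem _ ∅ hb] at hy
    obtain ⟨px, hpx, -, hx2, hx3, hx4⟩ := lastB_src hG hi h0 hin ha hx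
    obtain ⟨py, hpy, -, hy2, hy3, hy4⟩ := lastB_src hG hi h0 hin hb hy
    have hbl : b < (deleteB C s).length := hb
    rw [lastB_len hG hi h0 hin] at hbl
    -- a < b ≤ i - 1 : y's slot is b; px ≤ a+1 ≤ b
    have hpxb : px ≤ b := by
      rcases hx2 with h | h
      · omega
      · -- px = a + 1; if a < i-1 then px = a contradiction unless... a+1 ≤ b anyway
        omega
    have hpyb : py ≥ b := by omega
    rcases Nat.lt_or_ge px py with hlt | hge
    · exact hG.blt hlt hpx hpy
    · -- px = py = b : x from slot a with px = b = a+1 needs a = i-1? but a < b ≤ i-1 so a < i-1 so px = a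
      have ha1 : a < i - 1 := by omega
      have := hx3 ha1
      omega
  · rw [lastB_union hG hi h0 hin, lastB_len hG hi h0 hin,
      Finset.card_erase_of_mem (mem_U'.2 ⟨i, hi⟩), hG.2]

lemma lastB_prefix (hG : Good C) (hi : blkIn C i s) (h0 : 0 < i) (hin : i = C.length - 1) :
    ∀ k, sumP (deleteB C s) k =
      if k < i then sumP C k
      else if k = i then sumP C i + ((C.getD i ∅).card - 1)
      else sumP C (k + 1) - 1 := by
  have hil := hi.1
  have hci : 1 ≤ (C.getD i ∅).card := Finset.card_pos.2 ⟨s, hi.2⟩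
  have hd1 : Disjoint (C.getD (i-1) ∅) ((C.getD i ∅).erase s) := by
    rw [Finset.disjoint_left]
    intro x hx hx'
    rw [Finset.mem_erase] at hx'
    exact absurd (hG.uniq ⟨by omega, hx⟩ ⟨hi.1, hx'.2⟩) (by omega)
  have hstab : ∀ m, C.length ≤ m → sumP C m = sumP C C.length := by
    intro m hm
    induction m with
    | zero => have : C.length = 0 := by omega
              rw [this]
    | succ m ihm =>
      rcases Nat.lt_or_ge m C.length with h | h
      · have : C.length = m + 1 := by omega
        rw [this]
      · rw [sumP_succ, ihm h, List.getD_eq_default _ _ (by omega)]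
        simp
  intro k
  induction k with
  | zero =>
    simp only [sumP_zero]
    rw [if_pos h0]
  | succ k ih =>
    rw [sumP_succ, ih, lastB_getD hG hi h0 hin]
    by_cases h1 : k < i - 1
    · rw [if_pos (show k < i by omega), if_pos h1, if_pos (show k + 1 < i by omega), sumP_succ]
    · by_cases h2 : k = i - 1
      · rw [if_pos (show k < i by omega), if_neg (show ¬ k < i - 1 by omega), if_pos h2,
          if_neg (show ¬ k + 1 < i by omega), if_pos (show k + 1 = i by omega)]
        rw [Finset.card_union_of_disjoint hd1, Finset.card_erase_of_mem hi.2]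
        have e1 : sumP C (k + 1) = sumP C k + (C.getD k ∅).card := sumP_succ _ _
        have e2 : (C.getD k ∅).card = (C.getD (i - 1) ∅).card := by rw [h2]
        have e3 : sumP C (k + 1) = sumP C i := by rw [show k + 1 = i by omega]
        omega
      · rw [if_neg (show ¬ k < i by omega), if_neg (show ¬ k < i - 1 by omega),
          if_neg (show ¬ k = i - 1 by omega), if_neg (show ¬ k + 1 < i by omega),
          if_neg (show ¬ k + 1 = i by omega)]
        by_cases h3 : k = i
        · rw [if_pos h3]
          have e1 : sumP C (k + 1 + 1) = sumP C C.length := hstab _ (by omega)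
          have e2 : sumP C (i + 1) = sumP C C.length := by
            rw [show i + 1 = C.length by omega]
          have e3 : sumP C (i + 1) = sumP C i + (C.getD i ∅).card := sumP_succ _ _
          have e4 : sumP C i = sumP C k := by rw [h3]
          simp only [Finset.card_empty]
          omega
        · rw [if_neg h3]
          have e1 : sumP C (k + 1 + 1) = sumP C C.length := hstab _ (by omega)
          have e2 : sumP C (k + 1) = sumP C C.length := hstab _ (by omega)
          simp only [Finset.card_empty]
          omega

end LastCase

section Interface
variable {C : List (Finset ℕ)} {s : ℕ}

lemma ordered_card_U : ∀ {C : List (Finset ℕ)},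
    C.Pairwise (fun A B => ∀ a ∈ A, ∀ b ∈ B, a < b) → (U C).card = sumP C C.length := by
  intro C
  induction C with
  | nil => intro _; simp [U, sumP]
  | cons B C ih =>
    intro h
    rw [List.pairwise_cons] at h
    have hdisj : Disjoint B (U C) := by
      rw [Finset.disjoint_left]
      intro x hx hx'
      obtain ⟨B', hB', hxB'⟩ := mem_U.1 hx'
      exact absurd (h.1 B' hB' x hx x hxB') (lt_irrefl x)
    have hU : U (B :: C) = B ∪ U C := rfl
    rw [hU, Finset.card_union_of_disjoint hdisj, ih h.2]
    have : sumP (B :: C) (C.length + 1) = B.card + sumP C C.length := by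
      rw [sumP, Finset.sum_range_succ']
      simp only [List.getD_cons_succ, List.getD_cons_zero]
      rw [add_comm]
      rfl
    rw [List.length_cons, this]

lemma sumP_len (hG : Good C) : sumP C C.length = C.length := by
  rw [← ordered_card_U hG.1, hG.2]

lemma sumP_stable {C : List (Finset ℕ)} : ∀ m, C.length ≤ m → sumP C m = sumP C C.length := by
  intro m hm
  induction m with
  | zero => have : C.length = 0 := by omega
            rw [this]
  | succ m ihm =>
    rcases Nat.lt_or_ge m C.length with h | h
    · have : C.length = m + 1 := by omega
      rw [this]
    · rw [sumP_succ, ihm h, List.getD_eq_default _ _ (by omega)]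
      simp

/-- singleton case -/
lemma single_eq (hG : Good C) (hs : s ∈ U C) (hn : C.length = 1) : deleteB C s = [] := by
  have hb := blkIn_posn hG hs
  have hpos : posn C s = 0 := by have := hb.1; omega
  rw [deleteB_def', deleteA_def', hpos, if_neg (by omega), if_pos (by omega)]

lemma single_UC (hG : Good C) (hs : s ∈ U C) (hn : C.length = 1) : U C = {s} := by
  have h1 : (U C).card = 1 := by rw [hG.2, hn]
  obtain ⟨a, ha⟩ := Finset.card_eq_one.1 h1
  rw [ha] at hs ⊢
  rw [Finset.mem_singleton] at hs
  rw [hs]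

/-- convenient admissibility predicates -/
def AdmB (C : List (Finset ℕ)) (s : ℕ) : Prop :=
  s ∈ U C ∧ (posn C s = 0 → ∀ t ∈ C.getD 0 ∅, s ≤ t)

def AdmA (C : List (Finset ℕ)) (s : ℕ) : Prop :=
  s ∈ U C ∧
    ((posn C s = 0 ∧ ∀ t ∈ C.getD 0 ∅, s ≤ t) ∨
     (posn C s = C.length - 1 ∧ ∀ t ∈ C.getD (posn C s) ∅, t ≤ s) ∨
     (0 < posn C s ∧ posn C s + 1 < C.length))

lemma admB_iff (hG : Good C) : AdmissibleB C s ↔ AdmB C s := by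
  constructor
  · rintro ⟨i, hi, hs, hcond⟩
    have hpos : posn C s = i := posn_eq hG ⟨hi, hs⟩
    refine ⟨mem_U'.2 ⟨i, hi, hs⟩, fun h0 => ?_⟩
    rcases hcond with ⟨-, hmin⟩ | hne
    · exact hmin
    · omega
  · rintro ⟨hU, hmin⟩
    have hb := blkIn_posn hG hU
    by_cases h0 : posn C s = 0
    · exact ⟨posn C s, hb.1, hb.2, Or.inl ⟨h0, hmin h0⟩⟩
    · exact ⟨posn C s, hb.1, hb.2, Or.inr h0⟩

lemma admA_iff (hG : Good C) : AdmissibleA C s ↔ AdmA C s := by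
  constructor
  · rintro ⟨i, hi, hs, hcond⟩
    have hpos : posn C s = i := posn_eq hG ⟨hi, hs⟩
    refine ⟨mem_U'.2 ⟨i, hi, hs⟩, ?_⟩
    rw [hpos]
    exact hcond
  · rintro ⟨hU, hcond⟩
    have hb := blkIn_posn hG hU
    exact ⟨posn C s, hb.1, hb.2, hcond⟩

lemma admA_admB (hG : Good C) (hA : AdmA C s) : AdmB C s := by
  obtain ⟨hU, hcond⟩ := hA
  refine ⟨hU, fun h0 => ?_⟩
  rcases hcond with ⟨-, hmin⟩ | ⟨hlast, hmax⟩ | ⟨hpos, -⟩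
  · exact hmin
  · -- posn = 0 = len - 1 so length = 1 and the unique block is {s}
    intro t ht
    have hb := blkIn_posn hG hU
    have hn : C.length = 1 := by have := hb.1; omega
    have : t ∈ U C := mem_U'.2 ⟨0, by omega, ht⟩
    rw [single_UC hG hU hn, Finset.mem_singleton] at this
    omega
  · omega

lemma erase_eq_lofilter (hG : Good C) (hb : blkIn C (posn C s) s)
    (hmax : ∀ t ∈ C.getD (posn C s) ∅, t ≤ s) :
    (C.getD (posn C s) ∅).erase s = (C.getD (posn C s) ∅).filter (fun t => t < s) := by
  ext t
  simp only [Finset.mem_erase, Finset.mem_filter]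
  constructor
  · rintro ⟨h1, h2⟩
    exact ⟨h2, lt_of_le_of_ne (hmax t h2) h1⟩
  · rintro ⟨h1, h2⟩
    exact ⟨by omega, h1⟩

lemma delA_eq_delB (hG : Good C) (hA : AdmA C s) : deleteA C s = deleteB C s := by
  rw [deleteB_def']
  by_cases h : posn C s = C.length - 1 ∧ 0 < posn C s
  · rw [if_pos h]
    have hb := blkIn_posn hG hA.1
    have hmax : ∀ t ∈ C.getD (posn C s) ∅, t ≤ s := by
      rcases hA.2 with ⟨h0, -⟩ | ⟨-, hmax⟩ | ⟨-, hlt⟩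
      · omega
      · exact hmax
      · have := hb.1; omega
    rw [deleteA_def', if_neg (show ¬ C.length ≤ 1 by have := hb.1; omega),
      if_neg (by omega), if_pos h.1, erase_eq_lofilter hG hb hmax]
  · rw [if_neg h]

/-- The global interface for type-B deletions. -/
lemma delB_good (hG : Good C) (hB : AdmB C s) : Good (deleteB C s) := by
  have hb := blkIn_posn hG hB.1
  have hl := hb.1
  by_cases hn : C.length = 1
  · rw [single_eq hG hB.1 hn]
    constructor
    · simp
    · simp [U]
  · by_cases h0 : posn C s = 0
    · exact zero_good hG (h0 ▸ hb) (by omega) (hB.2 h0)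
    · by_cases hlast : posn C s = C.length - 1
      · exact lastB_good hG hb (by omega) hlast
      · exact mid_good hG hb (by omega) (by omega)

lemma delB_len (hG : Good C) (hB : AdmB C s) : (deleteB C s).length = C.length - 1 := by
  have hb := blkIn_posn hG hB.1
  have hl := hb.1
  by_cases hn : C.length = 1
  · rw [single_eq hG hB.1 hn]; simp [hn]
  · by_cases h0 : posn C s = 0
    · exact zero_len hG (h0 ▸ hb) (by omega)
    · by_cases hlast : posn C s = C.length - 1
      · exact lastB_len hG hb (by omega) hlast
      · exact mid_len hG hb (by omega) (by omega)

lemma delB_union (hG : Good C) (hB : AdmB C s) : U (deleteB C s) = (U C).erase s := by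
  have hb := blkIn_posn hG hB.1
  have hl := hb.1
  by_cases hn : C.length = 1
  · rw [single_eq hG hB.1 hn, single_UC hG hB.1 hn]
    simp [U]
  · by_cases h0 : posn C s = 0
    · exact zero_union hG (h0 ▸ hb) (by omega) (hB.2 h0)
    · by_cases hlast : posn C s = C.length - 1
      · exact lastB_union hG hb (by omega) hlast
      · exact mid_union hG hb (by omega) (by omega)

lemma delB_transport (hG : Good C) (hB : AdmB C s) {t p : ℕ} (hts : t ≠ s)
    (hp : blkIn C p t) :
    blkIn (deleteB C s) (np (posn C s) C.length s p t) t := by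
  have hb := blkIn_posn hG hB.1
  have hl := hb.1
  by_cases hn : C.length = 1
  · exfalso
    have : t ∈ U C := mem_U'.2 ⟨p, hp⟩
    rw [single_UC hG hB.1 hn, Finset.mem_singleton] at this
    exact hts this
  · by_cases h0 : posn C s = 0
    · have := zero_transport hG (h0 ▸ hb) (by omega) (hB.2 h0) hts hp
      rwa [h0]
    · by_cases hlast : posn C s = C.length - 1
      · exact lastB_transport hG hb (by omega) hlast hts hp
      · exact mid_transport hG hb (by omega) (by omega) hts hp

lemma delB_posn (hG : Good C) (hB : AdmB C s) {t : ℕ} (hts : t ≠ s) (ht : t ∈ U C) :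
    posn (deleteB C s) t = np (posn C s) C.length s (posn C t) t :=
  posn_eq (delB_good hG hB) (delB_transport hG hB hts (blkIn_posn hG ht))

lemma delB_prefix (hG : Good C) (hB : AdmB C s) :
    ∃ m, ((∀ t ∈ C.getD (posn C s) ∅, s ≤ t) →
           (posn C s + 1 < C.length ∨ (C.getD (posn C s) ∅).card = 1) → m = 0) ∧
      ∀ k, sumP (deleteB C s) k =
        if k < posn C s then sumP C k
        else if k = posn C s then sumP C (posn C s) + m
        else sumP C (k + 1) - 1 := by
  have hb := blkIn_posn hG hB.1
  have hl := hb.1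
  by_cases hn : C.length = 1
  · have hpos : posn C s = 0 := by omega
    refine ⟨0, fun _ _ => rfl, fun k => ?_⟩
    rw [single_eq hG hB.1 hn, hpos]
    have hUs := single_UC hG hB.1 hn
    have hblk : C.getD 0 ∅ = {s} := by
      apply Finset.Subset.antisymm
      · intro t ht
        have : t ∈ U C := mem_U'.2 ⟨0, by omega, ht⟩
        rwa [hUs] at this
      · intro t ht
        rw [Finset.mem_singleton] at ht
        rw [ht]
        exact hpos ▸ hb.2
    have hsump : ∀ j, 1 ≤ j → sumP C j = 1 := by
      intro j hj
      have h1 : sumP C 1 = 1 := by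
        rw [sumP_succ, sumP_zero, hblk]
        simp
      rcases Nat.lt_or_ge j C.length with h | h
      · omega
      · rw [sumP_stable j h, hn, h1]
    have hnil : sumP ([] : List (Finset ℕ)) k = 0 := by
      simp [sumP]
    rw [hnil]
    split_ifs with h1 h2
    · omega
    · rw [sumP_zero]
    · rw [hsump (k+1) (by omega)]
  · by_cases h0 : posn C s = 0
    · refine ⟨0, fun _ _ => rfl, fun k => ?_⟩
      have := zero_prefix hG (h0 ▸ hb) (by omega) (hB.2 h0) k
      rw [this, h0]
      split_ifs <;> first | omega | rfl | (rw [sumP_zero])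
    · by_cases hlast : posn C s = C.length - 1
      · refine ⟨(C.getD (posn C s) ∅).card - 1, fun _ hor => by omega, fun k => ?_⟩
        exact lastB_prefix hG hb (by omega) hlast k
      · refine ⟨((C.getD (posn C s) ∅).filter (fun t => t < s)).card, fun hmin _ => ?_, fun k => ?_⟩
        · have : (C.getD (posn C s) ∅).filter (fun t => t < s) = ∅ := by
            rw [Finset.filter_eq_empty_iff]
            intro t ht
            have := hmin t ht
            omega
          rw [this, Finset.card_empty]
        · exact mid_prefix hG hb (by omega) (by omega) k

lemma delB_superdiag (hG : Good C) (hB : AdmB C s) (hsd : Superdiagonal C) :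
    Superdiagonal (deleteB C s) := by
  obtain ⟨m, -, hm⟩ := delB_prefix hG hB
  have hl := (blkIn_posn hG hB.1).1
  intro k hk
  rw [delB_len hG hB] at hk
  show k ≤ sumP (deleteB C s) k
  rw [hm k]
  have hsd' : ∀ i, i ≤ C.length → i ≤ sumP C i := hsd
  have h1 : k ≤ sumP C k := hsd' k (show k ≤ C.length by omega)
  have h2 : k + 1 ≤ sumP C (k + 1) := hsd' (k + 1) (show k + 1 ≤ C.length by omega)
  split_ifs with ha hb'
  · exact h1
  · have : sumP C (posn C s) = sumP C k := by rw [hb']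
    omega
  · omega

end Interface

section Words

lemma isCPermB_nil {C : List (Finset ℕ)} : IsCPermB C [] ↔ ∀ B ∈ C, B = ∅ := by
  simp [IsCPermB]

lemma isCPermB_cons {C : List (Finset ℕ)} {s : ℕ} {w : List ℕ} :
    IsCPermB C (s :: w) ↔ AdmissibleB C s ∧ IsCPermB (deleteB C s) w := by
  simp [IsCPermB]

lemma isCPermA_nil {C : List (Finset ℕ)} : IsCPermA C [] ↔ ∀ B ∈ C, B = ∅ := by
  simp [IsCPermA]

lemma isCPermA_cons {C : List (Finset ℕ)} {s : ℕ} {w : List ℕ} :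
    IsCPermA C (s :: w) ↔ AdmissibleA C s ∧ IsCPermA (deleteA C s) w := by
  simp [IsCPermA]

lemma U_empty_all_empty {C : List (Finset ℕ)} (h : U C = ∅) : ∀ B ∈ C, B = ∅ := by
  intro B hB
  rw [Finset.eq_empty_iff_forall_notMem]
  intro x hx
  have : x ∈ U C := mem_U.2 ⟨B, hB, hx⟩
  rw [h] at this
  exact absurd this (Finset.notMem_empty x)

lemma permB_facts : ∀ {w : List ℕ} {C : List (Finset ℕ)}, Good C → IsCPermB C w →
    w.length = C.length ∧ w.Nodup ∧ ∀ t, t ∈ w ↔ t ∈ U C := by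
  intro w
  induction w with
  | nil =>
    intro C hG hw
    rw [isCPermB_nil] at hw
    have hU : U C = ∅ := by
      rw [Finset.eq_empty_iff_forall_notMem]
      intro x hx
      obtain ⟨B, hB, hxB⟩ := mem_U.1 hx
      rw [hw B hB] at hxB
      exact absurd hxB (Finset.notMem_empty x)
    have hlen : C.length = 0 := by
      have := hG.2
      rw [hU] at this
      simpa using this.symm
    refine ⟨by simp [hlen], List.nodup_nil, fun t => ?_⟩
    simp [hU]
  | cons s v ih =>
    intro C hG hw
    rw [isCPermB_cons] at hw
    obtain ⟨hadm, hrec⟩ := hw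
    have hB := (admB_iff hG).1 hadm
    have hG' := delB_good hG hB
    have hUD := delB_union hG hB
    obtain ⟨hlen, hnodup, hmem⟩ := ih hG' hrec
    have hsl := (blkIn_posn hG hB.1).1
    have hlen' := delB_len hG hB
    refine ⟨by simp; omega, ?_, fun t => ?_⟩
    · rw [List.nodup_cons]
      refine ⟨fun hs => ?_, hnodup⟩
      have : s ∈ U (deleteB C s) := (hmem s).1 hs
      rw [hUD, Finset.mem_erase] at this
      exact this.1 rfl
    · rw [List.mem_cons, hmem t, hUD, Finset.mem_erase]
      constructor
      · rintro (rfl | ⟨-, h⟩)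
        · exact hB.1
        · exact h
      · intro ht
        by_cases hts : t = s
        · exact Or.inl hts
        · exact Or.inr ⟨hts, ht⟩

/-- index function computed along a type-B permutation -/
def indexB (C : List (Finset ℕ)) : List ℕ → ℕ → ℕ
  | [], _ => 0
  | s :: w, t => if t = s then posn C t + 1 else indexB (deleteB C s) w t

lemma indexB_self {C : List (Finset ℕ)} {s : ℕ} {w : List ℕ} :
    indexB C (s :: w) s = posn C s + 1 := by simp [indexB]

lemma indexB_ne {C : List (Finset ℕ)} {s t : ℕ} {w : List ℕ} (h : t ≠ s) :
    indexB C (s :: w) t = indexB (deleteB C s) w t := by simp [indexB, h]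

lemma indexB_bounds : ∀ {w : List ℕ} {C : List (Finset ℕ)} {t : ℕ}, Good C → IsCPermB C w →
    t ∈ U C → 1 ≤ indexB C w t ∧ indexB C w t ≤ posn C t + 1 := by
  intro w
  induction w with
  | nil =>
    intro C t hG hw ht
    rw [isCPermB_nil] at hw
    obtain ⟨B, hB, htB⟩ := mem_U.1 ht
    rw [hw B hB] at htB
    exact absurd htB (Finset.notMem_empty t)
  | cons s v ih =>
    intro C t hG hw ht
    rw [isCPermB_cons] at hw
    obtain ⟨hadm, hrec⟩ := hw
    have hB := (admB_iff hG).1 hadm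
    by_cases hts : t = s
    · subst hts
      rw [indexB_self]
      omega
    · rw [indexB_ne hts]
      have ht' : t ∈ U (deleteB C s) := by
        rw [delB_union hG hB, Finset.mem_erase]
        exact ⟨hts, ht⟩
      have := ih (delB_good hG hB) hrec ht'
      have hposn := delB_posn hG hB hts ht
      rw [hposn] at this
      have := np_le (i := posn C s) (n := C.length) (s := s) (p := posn C t) (t := t)
      omega

lemma np_eq_self {i n s i' s' : ℕ} (h : np i' n s' i s = i) :
    i < i' ∨ (i = i' ∧ s' < s ∧ i' + 1 < n) ∨ (i = 0 ∧ i' = 0) := by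
  unfold np at h
  split_ifs at h with h1 h2
  · omega
  · omega
  · omega

lemma indexB_inj : ∀ {w w' : List ℕ} {C : List (Finset ℕ)}, Good C → IsCPermB C w →
    IsCPermB C w' → (∀ t ∈ U C, indexB C w t = indexB C w' t) → w = w' := by
  intro w
  induction w with
  | nil =>
    intro w' C hG hw hw' _
    have h1 := (permB_facts hG hw).1
    have h2 := (permB_facts hG hw').1
    simp only [List.length_nil] at h1
    cases w' with
    | nil => rfl
    | cons a l => simp [← h1] at h2
  | cons s v ih =>
    intro w' C hG hw hw' hIeq
    obtain ⟨hadm, hrec⟩ := isCPermB_cons.1 hw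
    have hB := (admB_iff hG).1 hadm
    cases w' with
    | nil =>
      have h2 := (permB_facts hG hw').1
      have h1 := (permB_facts hG hw).1
      simp only [List.length_nil] at h2
      simp [← h2] at h1
    | cons s' v' =>
      obtain ⟨hadm', hrec'⟩ := isCPermB_cons.1 hw'
      have hB' := (admB_iff hG).1 hadm'
      by_cases hss : s = s'
      · subst hss
        have hveq : v = v' := by
          apply ih (delB_good hG hB) hrec hrec'
          intro t ht
          have hts : t ≠ s := by
            rw [delB_union hG hB, Finset.mem_erase] at ht
            exact ht.1
          have ht' : t ∈ U C := by
            rw [delB_union hG hB, Finset.mem_erase] at ht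
            exact ht.2
          have := hIeq t ht'
          rwa [indexB_ne hts, indexB_ne hts] at this
        rw [hveq]
      · exfalso
        -- s ≠ s' : deduce that neither moves when the other is deleted
        have hsU' : s ∈ U (deleteB C s') := by
          rw [delB_union hG hB', Finset.mem_erase]
          exact ⟨hss, hB.1⟩
        have hs'U : s' ∈ U (deleteB C s) := by
          rw [delB_union hG hB, Finset.mem_erase]
          exact ⟨fun h => hss h.symm, hB'.1⟩
        have e1 : indexB C (s :: v) s = posn C s + 1 := indexB_self
        have e2 : indexB C (s' :: v') s' = posn C s' + 1 := indexB_self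
        have e3 : indexB C (s' :: v') s = indexB (deleteB C s') v' s := indexB_ne hss
        have e4 : indexB C (s :: v) s' = indexB (deleteB C s) v s' := indexB_ne (fun h => hss h.symm)
        have b1 := indexB_bounds (delB_good hG hB') hrec' hsU'
        have b2 := indexB_bounds (delB_good hG hB) hrec hs'U
        rw [delB_posn hG hB' hss hB.1] at b1
        rw [delB_posn hG hB (fun h => hss h.symm) hB'.1] at b2
        have q1 := hIeq s hB.1
        have q2 := hIeq s' hB'.1
        rw [e1, e3] at q1
        rw [e2, e4] at q2
        have np1 : np (posn C s') C.length s' (posn C s) s = posn C s := by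
          have := np_le (i := posn C s') (n := C.length) (s := s') (p := posn C s) (t := s)
          omega
        have np2 : np (posn C s) C.length s (posn C s') s' = posn C s' := by
          have := np_le (i := posn C s) (n := C.length) (s := s) (p := posn C s') (t := s')
          omega
        have d1 := np_eq_self np1
        have d2 := np_eq_self np2
        -- the only surviving case is posn C s = posn C s' = 0, contradicted by minimality
        have hz : posn C s = 0 ∧ posn C s' = 0 := by
          rcases d1 with h | ⟨h1, h2, h3⟩ | h
          · rcases d2 with h' | ⟨h1', h2', h3'⟩ | h' <;> omega
          · rcases d2 with h' | ⟨h1', h2', h3'⟩ | h' <;> omega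
          · exact h
        have hmin := hB.2 hz.1
        have hmin' := hB'.2 hz.2
        have hbs := blkIn_posn hG hB.1
        have hbs' := blkIn_posn hG hB'.1
        rw [hz.1] at hbs
        rw [hz.2] at hbs'
        have l1 := hmin s' hbs'.2
        have l2 := hmin' s hbs.2
        omega

lemma superdiag_admB_admA {C : List (Finset ℕ)} {s : ℕ} (hG : Good C)
    (hsd : Superdiagonal C) (hB : AdmB C s) : AdmA C s := by
  have hb := blkIn_posn hG hB.1
  have hl := hb.1
  refine ⟨hB.1, ?_⟩
  by_cases h0 : posn C s = 0
  · exact Or.inl ⟨h0, hB.2 h0⟩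
  · by_cases hmid : posn C s + 1 < C.length
    · exact Or.inr (Or.inr ⟨by omega, hmid⟩)
    · -- posn C s = C.length - 1 and the block is a singleton
      have hlast : posn C s = C.length - 1 := by omega
      have hsd' : ∀ i, i ≤ C.length → i ≤ sumP C i := hsd
      have h1 := hsd' (C.length - 1) (by omega)
      have h2 : sumP C C.length = C.length := sumP_len hG
      have h3 : sumP C C.length = sumP C (C.length - 1) + (C.getD (C.length - 1) ∅).card := by
        conv_lhs => rw [show C.length = (C.length - 1) + 1 by omega, sumP_succ]
      have hcard : (C.getD (posn C s) ∅).card ≤ 1 := by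
        rw [hlast]; omega
      refine Or.inr (Or.inl ⟨hlast, fun t ht => ?_⟩)
      have := Finset.card_le_one.1 hcard t ht s hb.2
      omega

lemma permA_permB : ∀ {w : List ℕ} {C : List (Finset ℕ)}, Good C → IsCPermA C w →
    IsCPermB C w := by
  intro w
  induction w with
  | nil =>
    intro C hG hw
    rw [isCPermA_nil] at hw
    exact isCPermB_nil.2 hw
  | cons s v ih =>
    intro C hG hw
    obtain ⟨hadm, hrec⟩ := isCPermA_cons.1 hw
    have hA := (admA_iff hG).1 hadm
    have hB := admA_admB hG hA
    rw [delA_eq_delB hG hA] at hrec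
    exact isCPermB_cons.2 ⟨(admB_iff hG).2 hB, ih (delB_good hG hB) hrec⟩

lemma permB_permA : ∀ {w : List ℕ} {C : List (Finset ℕ)}, Good C → Superdiagonal C →
    IsCPermB C w → IsCPermA C w := by
  intro w
  induction w with
  | nil =>
    intro C hG _ hw
    exact isCPermA_nil.2 (isCPermB_nil.1 hw)
  | cons s v ih =>
    intro C hG hsd hw
    obtain ⟨hadm, hrec⟩ := isCPermB_cons.1 hw
    have hB := (admB_iff hG).1 hadm
    have hA := superdiag_admB_admA hG hsd hB
    refine isCPermA_cons.2 ⟨(admA_iff hG).2 hA, ?_⟩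
    rw [delA_eq_delB hG hA]
    exact ih (delB_good hG hB) (delB_superdiag hG hB hsd) hrec

lemma exists_permB : ∀ (fuel : ℕ) {C : List (Finset ℕ)}, Good C → C.length ≤ fuel →
    ∃ w, IsCPermB C w := by
  intro fuel
  induction fuel with
  | zero =>
    intro C hG hlen
    refine ⟨[], isCPermB_nil.2 (U_empty_all_empty ?_)⟩
    rw [← Finset.card_eq_zero, hG.2]
    omega
  | succ fuel ih =>
    intro C hG hlen
    by_cases hU : (U C).Nonempty
    · set s := (U C).min' hU with hs
      have hsU : s ∈ U C := (U C).min'_mem hU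
      have hB : AdmB C s := by
        refine ⟨hsU, fun h0 t ht => ?_⟩
        have hbt : t ∈ U C := by
          have hl := (blkIn_posn hG hsU).1
          exact mem_U'.2 ⟨0, by omega, ht⟩
        exact (U C).min'_le t hbt
      have hlen' := delB_len hG hB
      obtain ⟨v, hv⟩ := ih (delB_good hG hB) (by omega)
      exact ⟨s :: v, isCPermB_cons.2 ⟨(admB_iff hG).2 hB, hv⟩⟩
    · rw [Finset.not_nonempty_iff_eq_empty] at hU
      exact ⟨[], isCPermB_nil.2 (U_empty_all_empty hU)⟩

lemma indexB_indexOf : ∀ {w : List ℕ} {C : List (Finset ℕ)} {t : ℕ}, Good C →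
    IsCPermB C w → t ∈ U C → indexB C w t + w.idxOf t ≤ C.length := by
  intro w
  induction w with
  | nil =>
    intro C t hG hw ht
    rw [isCPermB_nil] at hw
    obtain ⟨B, hB, htB⟩ := mem_U.1 ht
    rw [hw B hB] at htB
    exact absurd htB (Finset.notMem_empty t)
  | cons s v ih =>
    intro C t hG hw ht
    obtain ⟨hadm, hrec⟩ := isCPermB_cons.1 hw
    have hB := (admB_iff hG).1 hadm
    by_cases hts : t = s
    · subst hts
      rw [indexB_self, List.idxOf_cons_self]
      have := (blkIn_posn hG ht).1
      omega
    · rw [indexB_ne hts, List.idxOf_cons_ne _ (by exact fun h => hts h.symm)]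
      have ht' : t ∈ U (deleteB C s) := by
        rw [delB_union hG hB, Finset.mem_erase]
        exact ⟨hts, ht⟩
      have := ih (delB_good hG hB) hrec ht'
      have hlen' := delB_len hG hB
      have hl := (blkIn_posn hG hB.1).1
      omega

end Words

section Greedy

lemma superdiag_last_card {C : List (Finset ℕ)} (hG : Good C) (hsd : Superdiagonal C)
    (h : 0 < C.length) : (C.getD (C.length - 1) ∅).card ≤ 1 := by
  have hsd' : ∀ i, i ≤ C.length → i ≤ sumP C i := hsd
  have h1 := hsd' (C.length - 1) (by omega)
  have h2 : sumP C C.length = C.length := sumP_len hG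
  have h3 : sumP C C.length = sumP C (C.length - 1) + (C.getD (C.length - 1) ∅).card := by
    conv_lhs => rw [show C.length = (C.length - 1) + 1 by omega, sumP_succ]
  omega

lemma exists_permB_index : ∀ (fuel : ℕ) {C : List (Finset ℕ)} {I : ℕ → ℕ}, Good C →
    C.length ≤ fuel → Superdiagonal C → (∀ t ∈ U C, 1 ≤ I t ∧ I t ≤ posn C t + 1) →
    ∃ w, IsCPermB C w ∧ ∀ t ∈ U C, indexB C w t = I t := by
  intro fuel
  induction fuel with
  | zero =>
    intro C I hG hlen _ _
    have hU : U C = ∅ := by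
      rw [← Finset.card_eq_zero, hG.2]
      omega
    refine ⟨[], isCPermB_nil.2 (U_empty_all_empty hU), fun t ht => ?_⟩
    rw [hU] at ht
    exact absurd ht (Finset.notMem_empty t)
  | succ fuel ih =>
    intro C I hG hlen hsd hfeas
    set T := (U C).filter (fun t => I t = posn C t + 1) with hT
    by_cases h : T.Nonempty
    · have hjne : (T.image (posn C)).Nonempty := h.image _
      set j := (T.image (posn C)).max' hjne with hj
      have hj_max : ∀ x ∈ T, posn C x ≤ j := fun x hx =>
        (T.image (posn C)).le_max' _ (Finset.mem_image_of_mem _ hx)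
      have hne : (T.filter (fun t => posn C t = j)).Nonempty := by
        obtain ⟨x, hx, hx'⟩ := Finset.mem_image.1 ((T.image (posn C)).max'_mem hjne)
        exact ⟨x, Finset.mem_filter.2 ⟨hx, hx'⟩⟩
      set s := (T.filter (fun t => posn C t = j)).min' hne with hs
      have hsT' : s ∈ T.filter (fun t => posn C t = j) := Finset.min'_mem _ hne
      have hsT : s ∈ T := (Finset.mem_filter.1 hsT').1
      have hspos : posn C s = j := (Finset.mem_filter.1 hsT').2
      have hsU : s ∈ U C := (Finset.mem_filter.1 hsT).1
      have hsI : I s = j + 1 := by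
        have := (Finset.mem_filter.1 hsT).2
        rw [hspos] at this
        exact this
      have hs_min : ∀ x ∈ T.filter (fun t => posn C t = j), s ≤ x :=
        fun x hx => Finset.min'_le _ x hx
      have hbs := blkIn_posn hG hsU
      have hl := hbs.1
      -- tight elements of block 0 are everything
      have hblock0 : ∀ t ∈ C.getD 0 ∅, t ∈ T ∧ posn C t = 0 := by
        intro t ht
        have htU : t ∈ U C := mem_U'.2 ⟨0, by omega, ht⟩
        have hp : posn C t = 0 := posn_eq hG ⟨by omega, ht⟩
        have hf := hfeas t htU
        rw [hp] at hf
        refine ⟨Finset.mem_filter.2 ⟨htU, ?_⟩, hp⟩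
        rw [hp]; omega
      have hB : AdmB C s := by
        refine ⟨hsU, fun h0 t ht => ?_⟩
        have := hblock0 t ht
        exact hs_min t (Finset.mem_filter.2 ⟨this.1, by rw [this.2, ← h0, hspos]⟩)
      have hG' := delB_good hG hB
      have hlen' := delB_len hG hB
      have hsd' := delB_superdiag hG hB hsd
      have hUD := delB_union hG hB
      -- no two tight elements in the last block
      have hjlt : ∀ t, t ∈ T → t ≠ s → posn C t = j → j + 1 < C.length := by
        intro t htT hts hptj
        by_contra hcon
        have hjl : j = C.length - 1 := by
          have : j < C.length := by rw [← hspos]; exact hbs.1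
          omega
        have hcard := superdiag_last_card hG hsd (by omega)
        have hbt := blkIn_posn hG (Finset.mem_filter.1 htT).1
        rw [hptj, hjl] at hbt
        have hbs' := hbs
        rw [hspos, hjl] at hbs'
        have := Finset.one_lt_card.2 ⟨t, hbt.2, s, hbs'.2, hts⟩
        omega
      have hfeas' : ∀ t ∈ U (deleteB C s), 1 ≤ I t ∧ I t ≤ posn (deleteB C s) t + 1 := by
        intro t ht
        rw [hUD, Finset.mem_erase] at ht
        obtain ⟨hts, htU⟩ := ht
        have hf := hfeas t htU
        have hposn' := delB_posn hG hB hts htU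
        rw [hposn', hspos]
        by_cases htight : I t = posn C t + 1
        · have htT : t ∈ T := Finset.mem_filter.2 ⟨htU, htight⟩
          have hple := hj_max t htT
          by_cases hpj : posn C t = j
          · have hjlt' := hjlt t htT hts hpj
            have hst : s < t := by
              have := hs_min t (Finset.mem_filter.2 ⟨htT, hpj⟩)
              omega
            have : np j C.length s (posn C t) t = posn C t := by
              unfold np
              rw [if_neg (by omega), if_pos ⟨hpj, hst, hjlt'⟩]
              omega
            rw [this]
            omega
          · have : np j C.length s (posn C t) t = posn C t := by
              unfold np
              rw [if_pos (by omega)]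
            rw [this]
            omega
        · have hb1 : I t ≤ posn C t := by omega
          have := np_ge (i := j) (n := C.length) (s := s) (p := posn C t) (t := t)
          omega
      obtain ⟨w', hw', hidx'⟩ := ih hG' (by omega) hsd' hfeas'
      refine ⟨s :: w', isCPermB_cons.2 ⟨(admB_iff hG).2 hB, hw'⟩, fun t ht => ?_⟩
      by_cases hts : t = s
      · subst hts
        rw [indexB_self, hspos, hsI]
      · rw [indexB_ne hts]
        apply hidx'
        rw [hUD, Finset.mem_erase]
        exact ⟨hts, ht⟩
    · -- no tight elements: U C must be empty
      have hU : U C = ∅ := by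
        by_contra hUne
        have hUne' : (U C).Nonempty := Finset.nonempty_of_ne_empty hUne
        have hl : 0 < C.length := by
          have := hG.2
          have := hUne'.card_pos
          omega
        have hsd'' : ∀ i, i ≤ C.length → i ≤ sumP C i := hsd
        have h1 := hsd'' 1 (by omega)
        have hc0 : 1 ≤ (C.getD 0 ∅).card := by
          have : sumP C 1 = (C.getD 0 ∅).card := by
            rw [sumP_succ, sumP_zero]
            omega
          omega
        obtain ⟨t, ht⟩ := Finset.card_pos.1 hc0
        have htU : t ∈ U C := mem_U'.2 ⟨0, by omega, ht⟩
        have hp : posn C t = 0 := posn_eq hG ⟨by omega, ht⟩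
        have hf := hfeas t htU
        rw [hp] at hf
        have : t ∈ T := Finset.mem_filter.2 ⟨htU, by rw [hp]; omega⟩
        exact h ⟨t, this⟩
      refine ⟨[], isCPermB_nil.2 (U_empty_all_empty hU), fun t ht => ?_⟩
      rw [hU] at ht
      exact absurd ht (Finset.notMem_empty t)

end Greedy

section NotSuperdiag

lemma not_superdiag_spec {C : List (Finset ℕ)} (hG : Good C) (hnsd : ¬ Superdiagonal C) :
    ∃ i₀, 1 ≤ i₀ ∧ i₀ + 1 ≤ C.length ∧ sumP C i₀ < i₀ := by
  unfold Superdiagonal at hnsd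
  push_neg at hnsd
  obtain ⟨i, hi, hlt⟩ := hnsd
  have hlt' : sumP C i < i := hlt
  have h1 : i ≠ 0 := by
    intro h
    rw [h, sumP_zero] at hlt'
    omega
  have h2 : i ≠ C.length := by
    intro h
    rw [h, sumP_len hG] at hlt'
    omega
  exact ⟨i, by omega, by omega, hlt'⟩

lemma exists_B_not_A : ∀ (fuel : ℕ) {C : List (Finset ℕ)}, Good C → C.length ≤ fuel →
    ¬ Superdiagonal C → ∃ w, IsCPermB C w ∧ ¬ IsCPermA C w := by
  intro fuel
  induction fuel with
  | zero =>
    intro C hG hlen hnsd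
    exfalso
    apply hnsd
    intro i hi
    have : i = 0 := by omega
    subst this
    exact Nat.zero_le _
  | succ fuel ih =>
    intro C hG hlen hnsd
    obtain ⟨i₀, hi1, hi2, hi3⟩ := not_superdiag_spec hG hnsd
    have hn2 : 2 ≤ C.length := by omega
    by_cases hbig : 2 ≤ (C.getD (C.length - 1) ∅).card
    · -- delete the minimum of the last block: B-admissible but not A-admissible
      have hblne : (C.getD (C.length - 1) ∅).Nonempty := Finset.card_pos.1 (by omega)
      set s := (C.getD (C.length - 1) ∅).min' hblne with hsdef
      have hsb : blkIn C (C.length - 1) s := ⟨by omega, Finset.min'_mem _ hblne⟩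
      have hpos : posn C s = C.length - 1 := posn_eq hG hsb
      have hsU : s ∈ U C := mem_U'.2 ⟨_, hsb⟩
      have hB : AdmB C s := ⟨hsU, fun h0 => by omega⟩
      have hnotA : ¬ AdmA C s := by
        rintro ⟨-, hcond⟩
        obtain ⟨a, ha, b, hb, hab⟩ := Finset.one_lt_card.1 hbig
        rcases hcond with ⟨h0, -⟩ | ⟨-, hmax⟩ | ⟨-, hlt⟩
        · omega
        · rw [hpos] at hmax
          rcases eq_or_ne a s with rfl | has
          · have := hmax b hb
            have := Finset.min'_le _ b hb
            omega
          · have := hmax a ha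
            have := Finset.min'_le _ a ha
            omega
        · omega
      obtain ⟨v, hv⟩ := exists_permB C.length (delB_good hG hB)
        (by rw [delB_len hG hB]; omega)
      refine ⟨s :: v, isCPermB_cons.2 ⟨(admB_iff hG).2 hB, hv⟩, fun hA => ?_⟩
      exact hnotA ((admA_iff hG).1 (isCPermA_cons.1 hA).1)
    · -- last block has at most one element
      by_cases hblk : (C.getD i₀ ∅).Nonempty
      · -- delete the minimum of block i₀
        set s := (C.getD i₀ ∅).min' hblk with hsdef
        have hsb : blkIn C i₀ s := ⟨by omega, Finset.min'_mem _ hblk⟩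
        have hpos : posn C s = i₀ := posn_eq hG hsb
        have hsU : s ∈ U C := mem_U'.2 ⟨_, hsb⟩
        have hA : AdmA C s := by
          refine ⟨hsU, ?_⟩
          by_cases hmid : i₀ + 1 < C.length
          · exact Or.inr (Or.inr (by omega))
          · have hil : i₀ = C.length - 1 := by omega
            refine Or.inr (Or.inl ⟨by omega, fun t ht => ?_⟩)
            have ht' : t ∈ C.getD i₀ ∅ := by
              first
              | exact ht
              | rwa [hpos] at ht
            have hcard : (C.getD i₀ ∅).card ≤ 1 := by rw [hil]; omega
            have := Finset.card_le_one.1 hcard t ht' s hsb.2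
            omega
        have hB := admA_admB hG hA
        obtain ⟨m, hm0, hm⟩ := delB_prefix hG hB
        have hmz : m = 0 := by
          apply hm0
          · rw [hpos]
            exact fun t ht => Finset.min'_le _ t ht
          · rw [hpos]
            by_cases hmid : i₀ + 1 < C.length
            · exact Or.inl hmid
            · refine Or.inr ?_
              have hil : i₀ = C.length - 1 := by omega
              have hge : 1 ≤ (C.getD i₀ ∅).card := Finset.card_pos.2 hblk
              have : (C.getD i₀ ∅).card ≤ 1 := by rw [hil]; omega
              omega
        have hnsd' : ¬ Superdiagonal (deleteB C s) := by
          intro hsd'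
          have hsd'' : ∀ k, k ≤ (deleteB C s).length → k ≤ sumP (deleteB C s) k := hsd'
          have h1 := hsd'' i₀ (by rw [delB_len hG hB]; omega)
          rw [hm i₀, hpos, if_neg (by omega), if_pos rfl, hmz] at h1
          omega
        obtain ⟨w', hw'B, hw'nA⟩ := ih (delB_good hG hB)
          (by rw [delB_len hG hB]; omega) hnsd'
        refine ⟨s :: w', isCPermB_cons.2 ⟨(admB_iff hG).2 hB, hw'B⟩, fun hA' => ?_⟩
        obtain ⟨-, hrec⟩ := isCPermA_cons.1 hA'
        rw [delA_eq_delB hG hA] at hrec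
        exact hw'nA hrec
      · -- block i₀ is empty; pick any A-admissible element elsewhere
        have hc0 : (C.getD i₀ ∅).card = 0 := by
          rw [Finset.card_eq_zero, ← Finset.not_nonempty_iff_eq_empty]
          exact hblk
        have hfind : ∃ s, AdmA C s ∧ posn C s ≠ i₀ := by
          by_cases hb0 : (C.getD 0 ∅).Nonempty
          · set s := (C.getD 0 ∅).min' hb0 with hsdef
            have hsb : blkIn C 0 s := ⟨by omega, Finset.min'_mem _ hb0⟩
            have hpos : posn C s = 0 := posn_eq hG hsb
            exact ⟨s, ⟨mem_U'.2 ⟨_, hsb⟩,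
              Or.inl ⟨hpos, fun t ht => Finset.min'_le _ t ht⟩⟩, by omega⟩
          · by_cases hbl : (C.getD (C.length - 1) ∅).Nonempty
            · set s := (C.getD (C.length - 1) ∅).max' hbl with hsdef
              have hsb : blkIn C (C.length - 1) s := ⟨by omega, Finset.max'_mem _ hbl⟩
              have hpos : posn C s = C.length - 1 := posn_eq hG hsb
              have hne : C.length - 1 ≠ i₀ := by
                intro h
                rw [h] at hbl
                exact hblk hbl
              exact ⟨s, ⟨mem_U'.2 ⟨_, hsb⟩,
                Or.inr (Or.inl ⟨hpos, by rw [hpos]; exact fun t ht => Finset.le_max' _ t ht⟩)⟩,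
                by omega⟩
            · have hUne : (U C).Nonempty := by
                rw [← Finset.card_pos, hG.2]
                omega
              obtain ⟨t, htU⟩ := hUne
              have hbt := blkIn_posn hG htU
              have hne0 : posn C t ≠ 0 := by
                intro h
                rw [h] at hbt
                exact hb0 ⟨t, hbt.2⟩
              have hnel : posn C t ≠ C.length - 1 := by
                intro h
                rw [h] at hbt
                exact hbl ⟨t, hbt.2⟩
              have hnei : posn C t ≠ i₀ := by
                intro h
                rw [h] at hbt
                exact hblk ⟨t, hbt.2⟩
              exact ⟨t, ⟨htU, Or.inr (Or.inr ⟨by omega, by have := hbt.1; omega⟩)⟩, hnei⟩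
        obtain ⟨s, hA, hsne⟩ := hfind
        have hB := admA_admB hG hA
        obtain ⟨m, -, hm⟩ := delB_prefix hG hB
        have hnsd' : ¬ Superdiagonal (deleteB C s) := by
          intro hsd'
          have hsd'' : ∀ k, k ≤ (deleteB C s).length → k ≤ sumP (deleteB C s) k := hsd'
          have h1 := hsd'' i₀ (by rw [delB_len hG hB]; omega)
          rcases Nat.lt_or_ge i₀ (posn C s) with hlt | hge
          · rw [hm i₀, if_pos hlt] at h1
            omega
          · have hgt : posn C s < i₀ := by omega
            rw [hm i₀, if_neg (by omega), if_neg (by omega)] at h1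
            have : sumP C (i₀ + 1) = sumP C i₀ + (C.getD i₀ ∅).card := sumP_succ _ _
            omega
        obtain ⟨w', hw'B, hw'nA⟩ := ih (delB_good hG hB)
          (by rw [delB_len hG hB]; omega) hnsd'
        refine ⟨s :: w', isCPermB_cons.2 ⟨(admB_iff hG).2 hB, hw'B⟩, fun hA' => ?_⟩
        obtain ⟨-, hrec⟩ := isCPermA_cons.1 hA'
        rw [delA_eq_delB hG hA] at hrec
        exact hw'nA hrec

end NotSuperdiag

section Counting
variable {C : List (Finset ℕ)}

lemma setB_finite (hG : Good C) : {w : List ℕ | IsCPermB C w}.Finite := by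
  apply Set.Finite.subset (((U C).sort (· ≤ ·)).permutations.toFinset.finite_toSet)
  intro w hw
  simp only [Set.mem_setOf_eq] at hw
  obtain ⟨hlen, hnodup, hmem⟩ := permB_facts hG hw
  simp only [Finset.coe_sort_coe, List.coe_toFinset, Set.mem_setOf_eq, List.mem_permutations]
  rw [List.perm_ext_iff_of_nodup hnodup (Finset.sort_nodup _ _)]
  intro a
  rw [Finset.mem_sort]
  exact hmem a

lemma U_biUnion : U C = (Finset.range C.length).biUnion (fun i => C.getD i ∅) := by
  ext t
  rw [mem_U']
  simp only [Finset.mem_biUnion, Finset.mem_range]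
  constructor
  · rintro ⟨k, hk, ht⟩; exact ⟨k, hk, ht⟩
  · rintro ⟨k, hk, ht⟩; exact ⟨k, hk, ht⟩

lemma blocks_pairwise_disjoint (hG : Good C) :
    ∀ a, a ∈ Finset.range C.length → ∀ b, b ∈ Finset.range C.length → a ≠ b →
      Disjoint (C.getD a ∅) (C.getD b ∅) := by
  intro a ha b hb hab
  rw [Finset.mem_range] at ha hb
  rw [Finset.disjoint_left]
  intro x hxa hxb
  exact hab (hG.uniq ⟨ha, hxa⟩ ⟨hb, hxb⟩)

lemma prod_posn (hG : Good C) :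
    ∏ t ∈ U C, (posn C t + 1) = ∏ i ∈ Finset.range C.length, (i + 1) ^ (C.getD i ∅).card := by
  rw [U_biUnion (C := C), Finset.prod_biUnion]
  · apply Finset.prod_congr rfl
    intro i hi
    rw [Finset.mem_range] at hi
    rw [← Finset.prod_const]
    apply Finset.prod_congr rfl
    intro t ht
    rw [posn_eq hG ⟨hi, ht⟩]
  · intro a ha b hb hab
    exact blocks_pairwise_disjoint hG a (by simpa using ha) b (by simpa using hb) hab

noncomputable def Fmap (C : List (Finset ℕ)) (hG : Good C) :
    {w : List ℕ // IsCPermB C w} → (∀ t : (U C : Finset ℕ), Fin (posn C t.1 + 1)) :=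
  fun wp t => ⟨indexB C wp.1 t.1 - 1, by
    have hb := indexB_bounds hG wp.2 t.2
    omega⟩

lemma Fmap_inj (hG : Good C) : Function.Injective (Fmap C hG) := by
  rintro ⟨w, hw⟩ ⟨w', hw'⟩ h
  apply Subtype.ext
  apply indexB_inj hG hw hw'
  intro t ht
  have hv := congrFun h ⟨t, ht⟩
  have h1 := indexB_bounds hG hw ht
  have h2 := indexB_bounds hG hw' ht
  simp only [Fmap, Fin.mk.injEq] at hv
  omega

lemma card_pi_eq (hG : Good C) :
    Fintype.card (∀ t : (U C : Finset ℕ), Fin (posn C t.1 + 1)) =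
      ∏ i ∈ Finset.range C.length, (i + 1) ^ (C.getD i ∅).card := by
  rw [Fintype.card_pi]
  simp only [Fintype.card_fin]
  rw [Finset.prod_coe_sort (U C) (fun t => posn C t + 1)]
  exact prod_posn hG

lemma cardB_le (hG : Good C) :
    Nat.card {w : List ℕ // IsCPermB C w} ≤
      ∏ i ∈ Finset.range C.length, (i + 1) ^ (C.getD i ∅).card := by
  have h := Nat.card_le_card_of_injective _ (Fmap_inj hG)
  have h2 : Nat.card (∀ t : (U C : Finset ℕ), Fin (posn C t.1 + 1)) =
      ∏ i ∈ Finset.range C.length, (i + 1) ^ (C.getD i ∅).card := by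
    rw [Nat.card_eq_fintype_card]
    exact card_pi_eq hG
  omega

lemma cardB_eq (hG : Good C) (hsd : Superdiagonal C) :
    Nat.card {w : List ℕ // IsCPermB C w} =
      ∏ i ∈ Finset.range C.length, (i + 1) ^ (C.getD i ∅).card := by
  have hsurj : Function.Surjective (Fmap C hG) := by
    intro f
    set I : ℕ → ℕ := fun t => if h : t ∈ U C then (f ⟨t, h⟩).1 + 1 else 1 with hI
    have hfeas : ∀ t ∈ U C, 1 ≤ I t ∧ I t ≤ posn C t + 1 := by
      intro t ht
      have hlt : (f ⟨t, ht⟩).1 < posn C t + 1 := (f ⟨t, ht⟩).isLt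
      rw [hI]
      simp only [dif_pos ht]
      omega
    obtain ⟨w, hw, hidx⟩ := exists_permB_index C.length hG le_rfl hsd hfeas
    refine ⟨⟨w, hw⟩, ?_⟩
    funext t
    apply Fin.ext
    have h1 := hidx t.1 t.2
    have h2 : I t.1 = (f t).1 + 1 := by
      rw [hI]
      simp only [dif_pos t.2, Subtype.coe_eta]
    show indexB C w t.1 - 1 = (f t).1
    omega
  rw [Nat.card_eq_of_bijective _ ⟨Fmap_inj hG, hsurj⟩, Nat.card_eq_fintype_card, card_pi_eq hG]

lemma cardB_lt (hG : Good C) (hnsd : ¬ Superdiagonal C) :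
    Nat.card {w : List ℕ // IsCPermB C w} <
      ∏ i ∈ Finset.range C.length, (i + 1) ^ (C.getD i ∅).card := by
  set f₀ : ∀ t : (U C : Finset ℕ), Fin (posn C t.1 + 1) :=
    fun t => ⟨posn C t.1, Nat.lt_succ_self _⟩ with hf₀
  have hnot : f₀ ∉ Set.range (Fmap C hG) := by
    rintro ⟨⟨w, hw⟩, hFw⟩
    have hall : ∀ t, t ∈ U C → indexB C w t = posn C t + 1 := by
      intro t ht
      have hv := congrFun hFw ⟨t, ht⟩
      simp only [Fmap, hf₀, Fin.mk.injEq] at hv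
      have hb := indexB_bounds hG hw ht
      omega
    obtain ⟨i₀, hi1, hi2, hi3⟩ := not_superdiag_spec hG hnsd
    obtain ⟨hwlen, hwnodup, hwmem⟩ := permB_facts hG hw
    classical
    have hsmall_eq : (U C).filter (fun t => posn C t < i₀)
        = (Finset.range i₀).biUnion (fun i => C.getD i ∅) := by
      ext t
      simp only [Finset.mem_filter, Finset.mem_biUnion, Finset.mem_range]
      constructor
      · rintro ⟨htU, hlt⟩
        exact ⟨posn C t, hlt, (blkIn_posn hG htU).2⟩
      · rintro ⟨j, hj, ht⟩
        have hb : blkIn C j t := ⟨by omega, ht⟩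
        exact ⟨mem_U'.2 ⟨j, hb⟩, by rw [posn_eq hG hb]; omega⟩
    have hcard_small : ((U C).filter (fun t => posn C t < i₀)).card = sumP C i₀ := by
      rw [hsmall_eq, Finset.card_biUnion (fun a ha b hb hab =>
        blocks_pairwise_disjoint hG a (by simp only [Finset.mem_coe, Finset.mem_range] at ha ⊢; omega)
          b (by simp only [Finset.mem_coe, Finset.mem_range] at hb ⊢; omega) hab)]
      rfl
    have hfilter : ((U C).filter (fun t => posn C t < i₀)).card +
        ((U C).filter (fun t => ¬ posn C t < i₀)).card = (U C).card :=
      Finset.card_filter_add_card_filter_not _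
    have hUcard : (U C).card = C.length := hG.2
    have hmapsto : ∀ t ∈ (U C).filter (fun t => ¬ posn C t < i₀),
        w.idxOf t ∈ Finset.range (C.length - i₀) := by
      intro t ht
      rw [Finset.mem_filter] at ht
      obtain ⟨htU, hge⟩ := ht
      have hio := indexB_indexOf hG hw htU
      have hidx := hall t htU
      rw [Finset.mem_range]
      omega
    have hinj : Set.InjOn (fun t => w.idxOf t) ((U C).filter (fun t => ¬ posn C t < i₀)) := by
      intro a ha b hb hab
      rw [Finset.mem_coe, Finset.mem_filter] at ha hb
      exact (List.idxOf_inj ((hwmem a).2 ha.1)).1 hab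
    have hle := Finset.card_le_card_of_injOn _ hmapsto hinj
    rw [Finset.card_range] at hle
    omega
  have h1 : Nat.card {w : List ℕ // IsCPermB C w} = (Set.range (Fmap C hG)).ncard := by
    rw [← Nat.card_range_of_injective (Fmap_inj hG), Nat.card_coe_set_eq]
  have h2 : (Set.range (Fmap C hG)).ncard < (Set.univ : Set (∀ t : (U C : Finset ℕ), Fin (posn C t.1 + 1))).ncard := by
    apply Set.ncard_lt_ncard
    · rw [Set.ssubset_univ_iff]
      intro h
      rw [h] at hnot
      exact hnot (Set.mem_univ _)
    · exact Set.finite_univ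
  rw [Set.ncard_univ, Nat.card_eq_fintype_card, card_pi_eq hG] at h2
  omega

end Counting

end Dev

/-- (#type A `C`-perms) ≤ (#type B `C`-perms) ≤ `1^{|C₁|}⋯n^{|C_n|}`,
each inequality being an equality iff `C` is superdiagonal. -/
theorem cpermA_le_cpermB (n : ℕ) (S : Finset ℕ) (C : List (Finset ℕ))
    (hS : S.card = n) (hlen : C.length = n) (hC : IsDivision C S) :
    Nat.card {w : List ℕ // IsCPermA C w} ≤ Nat.card {w : List ℕ // IsCPermB C w} ∧
    Nat.card {w : List ℕ // IsCPermB C w} ≤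
      ∏ i ∈ Finset.range n, (i + 1) ^ (C.getD i ∅).card ∧
    (Nat.card {w : List ℕ // IsCPermA C w} = Nat.card {w : List ℕ // IsCPermB C w} ↔
      Superdiagonal C) ∧
    (Nat.card {w : List ℕ // IsCPermB C w} =
        ∏ i ∈ Finset.range n, (i + 1) ^ (C.getD i ∅).card ↔ Superdiagonal C) := by
  have hUS : U C = S := by
    ext t
    rw [mem_U']
    constructor
    · rintro ⟨k, hk, ht⟩
      exact hC.2.1 k hk ht
    · intro ht
      obtain ⟨i, hi, hti⟩ := hC.1 t ht
      exact ⟨i, hi, hti⟩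
  have hord : C.Pairwise (fun A B => ∀ a ∈ A, ∀ b ∈ B, a < b) := by
    rw [List.pairwise_iff_getElem]
    intro a b ha hb hab x hx y hy
    exact hC.2.2 a b hab hb x (by rwa [List.getD_eq_getElem C ∅ ha]) y
      (by rwa [List.getD_eq_getElem C ∅ hb])
  have hG : Good C := ⟨hord, by rw [hUS, hS, hlen]⟩
  have hBfin := setB_finite hG
  have hsubAB : {w : List ℕ | IsCPermA C w} ⊆ {w : List ℕ | IsCPermB C w} :=
    fun w hw => permA_permB hG hw
  have hcoeA : Nat.card {w : List ℕ // IsCPermA C w} = {w : List ℕ | IsCPermA C w}.ncard :=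
    Nat.card_coe_set_eq _
  have hcoeB : Nat.card {w : List ℕ // IsCPermB C w} = {w : List ℕ | IsCPermB C w}.ncard :=
    Nat.card_coe_set_eq _
  have hprod : ∏ i ∈ Finset.range n, (i + 1) ^ (C.getD i ∅).card
      = ∏ i ∈ Finset.range C.length, (i + 1) ^ (C.getD i ∅).card := by rw [hlen]
  have hAB_of_sd : Superdiagonal C →
      Nat.card {w : List ℕ // IsCPermA C w} = Nat.card {w : List ℕ // IsCPermB C w} := by
    intro hsd
    rw [hcoeA, hcoeB]
    congr 1
    apply Set.Subset.antisymm hsubAB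
    intro w hw
    exact permB_permA hG hsd hw
  have hAB_strict : ¬ Superdiagonal C →
      Nat.card {w : List ℕ // IsCPermA C w} < Nat.card {w : List ℕ // IsCPermB C w} := by
    intro hnsd
    obtain ⟨w, hwB, hwnA⟩ := exists_B_not_A C.length hG le_rfl hnsd
    rw [hcoeA, hcoeB]
    exact Set.ncard_lt_ncard ⟨hsubAB, fun hsub => hwnA (hsub hwB)⟩ hBfin
  refine ⟨?_, ?_, ?_, ?_⟩
  · rw [hcoeA, hcoeB]
    exact Set.ncard_le_ncard hsubAB hBfin
  · rw [hprod]
    exact cardB_le hG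
  · constructor
    · intro heq
      by_contra hnsd
      have := hAB_strict hnsd
      omega
    · exact hAB_of_sd
  · constructor
    · intro heq
      by_contra hnsd
      have := cardB_lt hG hnsd
      rw [hprod] at heq
      omega
    · intro hsd
      rw [hprod]
      exact cardB_eq hG hsd

end MixedEulerian
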